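/- arXiv:2501.18920 — 5 statements merged into one kernel-verified Lean document; each statement's English description precedes it below -/
import Mathlib

section
/- Let m ≥ 5 be an odd integer, m̄ = m/2, and ρ > 0. Define f_ρ(t) = (t^m + ρ)^{1/2} and Γ_ρ(t) = (f_ρ(t), t) for t ≥ 0. Then for all real numbers s ≥ t ≥ 0, the arc length of Γ_ρ over [t,s] exceeds the chord length by at most (m̄²/2)·(m̄ − 1)·s^{m−3}·(s−t)², i.e. ∫_t^s √(1 + f_ρ′(u)²) du − ‖Γ_ρ(s) − Γ_ρ(t)‖ ≤ (m²(m−2)/16)·s^{m−3}·(s−t)². -/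
open Real

lemma aux_pow_sub (t s : ℝ) (ht : 0 ≤ t) (hts : t ≤ s) :
    ∀ n : ℕ, s ^ (n+1) - t ^ (n+1) ≤ (n+1 : ℝ) * s ^ n * (s - t) := by
  intro n
  induction n with
  | zero => simp
  | succ k ih =>
    have hs : 0 ≤ s := ht.trans hts
    have h1 : t ^ (k+1) ≤ s ^ (k+1) := pow_le_pow_left₀ ht hts _
    have h3 : s * (s^(k+1) - t^(k+1)) ≤ s * ((k+1 : ℝ) * s ^ k * (s - t)) :=
      mul_le_mul_of_nonneg_left ih hs
    have es : s^(k+1+1) = s * s^(k+1) := by ring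
    have et : t^(k+1+1) = t * t^(k+1) := by ring
    have h3' : s * ((k+1 : ℝ) * s^k * (s-t)) = (k+1 : ℝ) * s^(k+1) * (s-t) := by ring
    have h4 : (s-t) * t^(k+1) ≤ (s-t) * s^(k+1) :=
      mul_le_mul_of_nonneg_left h1 (sub_nonneg.mpr hts)
    push_cast
    rw [es, et]
    calc s * s^(k+1) - t * t^(k+1) = s * (s^(k+1) - t^(k+1)) + (s-t) * t^(k+1) := by ring
      _ ≤ (k+1 : ℝ) * s^(k+1) * (s-t) + (s-t) * s^(k+1) := by rw [← h3']; exact add_le_add h3 h4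
      _ = ((k:ℝ)+1+1) * s^(k+1) * (s-t) := by ring

lemma aux_tangent (x c : ℝ) (hx : 0 ≤ x) (hc : 0 ≤ c) :
    Real.sqrt (1 + x^2) ≤ (1 + c*x)/Real.sqrt (1 + c^2) + (x - c)^2/2 := by
  have hq : (0:ℝ) < Real.sqrt (1 + c^2) := Real.sqrt_pos.mpr (by positivity)
  have h1 : Real.sqrt (1 + x^2) * Real.sqrt (1 + c^2) = Real.sqrt ((1+c*x)^2 + (x-c)^2) := by
    rw [← Real.sqrt_mul (by positivity)]
    congr 1; ring
  have h2 : Real.sqrt ((1+c*x)^2 + (x-c)^2) ≤ (1 + c*x) + (x-c)^2/2 := by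
    have := Real.sqrt_le_sqrt (show (1+c*x)^2 + (x-c)^2 ≤ ((1 + c*x) + (x-c)^2/2)^2 by
      nlinarith [sq_nonneg (x-c), mul_nonneg hc hx, sq_nonneg ((x-c)^2)])
    calc Real.sqrt ((1+c*x)^2 + (x-c)^2) ≤ Real.sqrt (((1 + c*x) + (x-c)^2/2)^2) := this
      _ = (1 + c*x) + (x-c)^2/2 := Real.sqrt_sq (by nlinarith [mul_nonneg hc hx, sq_nonneg (x-c)])
  have h3 : Real.sqrt (1 + x^2) * Real.sqrt (1 + c^2) ≤ (1 + c*x) + (x-c)^2/2 * Real.sqrt (1 + c^2) := by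
    rw [h1]
    refine h2.trans ?_
    have hq1 : (1:ℝ) ≤ Real.sqrt (1 + c^2) := Real.one_le_sqrt.mpr (by nlinarith)
    nlinarith [sq_nonneg (x-c)]
  rw [div_add' _ _ _ (ne_of_gt hq), le_div_iff₀ hq]
  linarith [h3]

set_option maxHeartbeats 1000000 in
/-- for `f_ρ(t) = √(t^m + ρ)` and `Γ_ρ(t) = (f_ρ(t), t)`, the arc length of
`Γ_ρ` over `[t,s]` exceeds the chord length by at most `(m²(m−2)/16) s^{m−3} (s−t)²`. -/
theorem statement3 (m : ℕ) (hodd : Odd m) (hm : 5 ≤ m) (ρ : ℝ) (hρ : 0 < ρ)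
    (f : ℝ → ℝ) (hf : ∀ t : ℝ, f t = Real.sqrt (t ^ m + ρ))
    (t s : ℝ) (ht : 0 ≤ t) (hts : t ≤ s) :
    (∫ u in t..s, Real.sqrt (1 + (deriv f u) ^ 2)) -
      Real.sqrt ((f s - f t) ^ 2 + (s - t) ^ 2) ≤
    ((m : ℝ) ^ 2 * ((m : ℝ) - 2) / 16) * s ^ (m - 3) * (s - t) ^ 2 := by
  rcases eq_or_lt_of_le hts with heq | hlt
  · subst heq
    simp [intervalIntegral.integral_same]
  have hs : 0 < s := lt_of_le_of_lt ht hlt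
  have hfe : f = fun u => Real.sqrt (u ^ m + ρ) := funext hf
  subst hfe
  clear hf hodd
  set g : ℝ → ℝ := fun u => (m:ℝ) * u^(m-1) / (2 * Real.sqrt (u^m + ρ)) with hgdef
  have hpos : ∀ u : ℝ, 0 ≤ u → 0 < u^m + ρ := fun u hu => by positivity
  have hderiv : ∀ u : ℝ, 0 ≤ u →
      HasDerivAt (fun y : ℝ => Real.sqrt (y^m + ρ)) (g u) u := by
    intro u hu
    have h1 : HasDerivAt (fun y : ℝ => y^m + ρ) ((m:ℝ) * u^(m-1)) u :=
      (hasDerivAt_pow m u).add_const ρ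
    exact h1.sqrt (ne_of_gt (hpos u hu))
  have hmono : ∀ u v : ℝ, 0 ≤ u → u ≤ v → g u ≤ g v := by
    intro u v hu huv
    have hv : 0 ≤ v := hu.trans huv
    have hdu : (0:ℝ) < 2 * Real.sqrt (u^m + ρ) := by
      have := hpos u hu; positivity
    have hdv : (0:ℝ) < 2 * Real.sqrt (v^m + ρ) := by
      have := hpos v hv; positivity
    rw [hgdef]
    simp only
    rw [div_le_div_iff₀ hdu hdv]
    have ha : 0 ≤ u^(m-1) := pow_nonneg hu _
    have hb : 0 ≤ v^(m-1) := pow_nonneg hv _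
    have hsq : (u^(m-1))^2 * (v^m+ρ) ≤ (v^(m-1))^2 * (u^m+ρ) := by
      have e1 : (u^(m-1))^2 = u^m * u^(m-2) := by
        rw [← pow_mul, ← pow_add]; congr 1; omega
      have e2 : (v^(m-1))^2 = v^m * v^(m-2) := by
        rw [← pow_mul, ← pow_add]; congr 1; omega
      rw [e1, e2]
      have h1 : u^m ≤ v^m := pow_le_pow_left₀ hu huv _
      have h2 : u^(m-2) ≤ v^(m-2) := pow_le_pow_left₀ hu huv _
      have hum : 0 ≤ u^m := pow_nonneg hu _
      have hvm : 0 ≤ v^m := pow_nonneg hv _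
      have hum2 : 0 ≤ u^(m-2) := pow_nonneg hu _
      have q1 : u^m * v^m * u^(m-2) ≤ u^m * v^m * v^(m-2) :=
        mul_le_mul_of_nonneg_left h2 (mul_nonneg hum hvm)
      have q2 : u^m * u^(m-2) ≤ v^m * v^(m-2) :=
        mul_le_mul h1 h2 hum2 hvm
      nlinarith [q1, q2, hρ.le]
    have key : u^(m-1) * Real.sqrt (v^m+ρ) ≤ v^(m-1) * Real.sqrt (u^m+ρ) := by
      rw [show u^(m-1) * Real.sqrt (v^m+ρ) = Real.sqrt ((u^(m-1))^2 * (v^m+ρ)) by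
        rw [Real.sqrt_mul (sq_nonneg _), Real.sqrt_sq ha],
        show v^(m-1) * Real.sqrt (u^m+ρ) = Real.sqrt ((v^(m-1))^2 * (u^m+ρ)) by
        rw [Real.sqrt_mul (sq_nonneg _), Real.sqrt_sq hb]]
      exact Real.sqrt_le_sqrt hsq
    nlinarith [key, Nat.cast_nonneg (α := ℝ) m]
  have hgnn : ∀ u : ℝ, 0 ≤ u → 0 ≤ g u := by
    intro u hu
    apply div_nonneg (mul_nonneg (Nat.cast_nonneg m) (pow_nonneg hu _))
    positivity
  have hgc : ContinuousOn g (Set.uIcc t s) := by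
    apply ContinuousOn.div
    · fun_prop
    · fun_prop
    · intro u hu
      rw [Set.uIcc_of_le hts] at hu
      have := hpos u (le_trans ht hu.1)
      positivity
  -- constants
  set c : ℝ := (g t + g s)/2 with hcdef
  set D : ℝ := g s - g t with hDdef
  set q : ℝ := Real.sqrt (1 + c^2) with hqdef
  have hgts : g t ≤ g s := hmono t s ht hts
  have hgt0 : 0 ≤ g t := hgnn t ht
  have hc0 : 0 ≤ c := by rw [hcdef]; linarith
  have hD0 : 0 ≤ D := by rw [hDdef]; linarith
  have hq : (0:ℝ) < q := Real.sqrt_pos.mpr (by positivity)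
  clear_value c D q
  -- FTC
  have hderiv' : ∀ u ∈ Set.uIcc t s, HasDerivAt (fun y : ℝ => Real.sqrt (y^m + ρ)) (g u) u := by
    intro u hu
    rw [Set.uIcc_of_le hts] at hu
    exact hderiv u (le_trans ht hu.1)
  have hgInt : IntervalIntegrable g MeasureTheory.volume t s := hgc.intervalIntegrable
  have hFTC : ∫ u in t..s, g u = Real.sqrt (s^m + ρ) - Real.sqrt (t^m + ρ) :=
    intervalIntegral.integral_eq_sub_of_hasDerivAt hderiv' hgInt
  -- rewrite the integrand
  have hIeq : (∫ u in t..s, Real.sqrt (1 + (deriv (fun y : ℝ => Real.sqrt (y^m + ρ)) u) ^ 2))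
      = ∫ u in t..s, Real.sqrt (1 + (g u)^2) := by
    apply intervalIntegral.integral_congr
    intro u hu
    rw [Set.uIcc_of_le hts] at hu
    show Real.sqrt (1 + (deriv (fun y : ℝ => Real.sqrt (y^m + ρ)) u) ^ 2) = Real.sqrt (1 + (g u)^2)
    rw [(hderiv u (le_trans ht hu.1)).deriv]
  clear_value g
  -- pointwise bound and integral comparison
  have hptwise : ∀ u ∈ Set.Icc t s, Real.sqrt (1 + (g u)^2) ≤ (1/q + D^2/8) + (c/q) * g u := by
    intro u hu
    have hu0 : 0 ≤ u := le_trans ht hu.1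
    have hlb : g t ≤ g u := hmono t u ht hu.1
    have hub : g u ≤ g s := hmono u s hu0 hu.2
    have h6 := aux_tangent (g u) c (hgnn u hu0) hc0
    rw [← hqdef] at h6
    have hvar : (g u - c)^2 ≤ D^2/4 := by
      rw [hcdef, hDdef]
      nlinarith [mul_nonneg (sub_nonneg.mpr hlb) (sub_nonneg.mpr hub)]
    have hsplit : (1 + c * g u)/q = 1/q + (c/q) * g u := by
      rw [add_div]; ring
    rw [hsplit] at h6
    linarith
  have hcont1 : ContinuousOn (fun u => Real.sqrt (1 + (g u)^2)) (Set.uIcc t s) := by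
    apply ContinuousOn.sqrt
    exact (continuousOn_const.add (hgc.pow 2))
  have hmain : (∫ u in t..s, Real.sqrt (1 + (g u)^2))
      ≤ ∫ u in t..s, ((1/q + D^2/8) + (c/q) * g u) := by
    apply intervalIntegral.integral_mono_on hts
    · exact hcont1.intervalIntegrable
    · exact (intervalIntegrable_const.add (hgInt.const_mul _))
    · exact hptwise
  have hcomp : (∫ u in t..s, ((1/q + D^2/8) + (c/q) * g u))
      = (s - t) * (1/q + D^2/8) + (c/q) * (Real.sqrt (s^m + ρ) - Real.sqrt (t^m + ρ)) := by
    rw [intervalIntegral.integral_add intervalIntegrable_const (hgInt.const_mul _),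
      intervalIntegral.integral_const_mul, hFTC, intervalIntegral.integral_const,
      smul_eq_mul]
  -- chord bound
  set Δ : ℝ := Real.sqrt (s^m + ρ) - Real.sqrt (t^m + ρ) with hΔdef
  have hΔ0 : 0 ≤ Δ := by
    rw [hΔdef, sub_nonneg]
    exact Real.sqrt_le_sqrt (add_le_add_left (pow_le_pow_left₀ ht hts m) ρ)
  have hchord' : Real.sqrt (Δ^2 + (s-t)^2)
      = Real.sqrt (((fun u : ℝ => Real.sqrt (u^m+ρ)) s - (fun u : ℝ => Real.sqrt (u^m+ρ)) t)^2 + (s-t)^2) := rfl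
  clear_value Δ
  have hchord : (s - t) * (1/q) + (c/q) * Δ ≤ Real.sqrt (Δ^2 + (s-t)^2) := by
    have h8 : (s - t) + c * Δ ≤ Real.sqrt ((1 + c^2) * (Δ^2 + (s-t)^2)) := by
      have hA1 : 0 ≤ (s - t) + c * Δ := by
        have := mul_nonneg hc0 hΔ0; linarith
      have hA2 : (0:ℝ) ≤ (1 + c^2) * (Δ^2 + (s-t)^2) := by positivity
      rw [Real.le_sqrt hA1 hA2]
      have hA3 : (1 + c^2) * (Δ^2 + (s-t)^2) - ((s-t) + c*Δ)^2 = (Δ - c*(s-t))^2 := by ring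
      linarith [sq_nonneg (Δ - c*(s-t)), hA3]
    rw [Real.sqrt_mul (by positivity), ← hqdef] at h8
    rw [show (s-t) * (1/q) + (c/q) * Δ = ((s-t) + c * Δ)/q by ring, div_le_iff₀ hq]
    calc (s-t) + c * Δ ≤ q * Real.sqrt (Δ^2 + (s-t)^2) := h8
      _ = Real.sqrt (Δ^2 + (s-t)^2) * q := mul_comm _ _
  -- bounds on D
  have hsm : (0:ℝ) < s^m := by positivity
  set r : ℝ := Real.sqrt (s^m) with hrdef
  have hr : (0:ℝ) < r := Real.sqrt_pos.mpr hsm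
  have hrr : r * r = s^m := Real.mul_self_sqrt hsm.le
  have hsrt : r ≤ Real.sqrt (s^m + ρ) := Real.sqrt_le_sqrt (by linarith)
  clear_value r
  have hDA : D ≤ (m:ℝ) * s^(m-1) / (2*r) := by
    have h9 : g s ≤ (m:ℝ) * s^(m-1) / (2*r) := by
      rw [hgdef]; simp only
      gcongr
      all_goals first
        | exact mul_nonneg (Nat.cast_nonneg m) (pow_nonneg hs.le _)
        | positivity
        | exact hsrt
    rw [hDdef]; linarith
  have hpow1 : t^(m-1) ≤ s^(m-1) := pow_le_pow_left₀ ht hts _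
  have hDB : D ≤ (m:ℝ) * (((m:ℝ)-1) * s^(m-2) * (s-t)) / (2*r) := by
    have step1 : D ≤ (m:ℝ) * (s^(m-1) - t^(m-1)) / (2 * Real.sqrt (s^m + ρ)) := by
      have h10 : (m:ℝ) * t^(m-1) / (2 * Real.sqrt (s^m + ρ)) ≤ g t := by
        rw [hgdef]; simp only
        gcongr
        all_goals first
          | exact mul_nonneg (Nat.cast_nonneg m) (pow_nonneg ht _)
          | exact mul_pos two_pos (Real.sqrt_pos.mpr (hpos t ht))
          | exact Real.sqrt_le_sqrt (add_le_add_right (pow_le_pow_left₀ ht hts m) ρ)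
      have h11 : g s = (m:ℝ) * s^(m-1) / (2 * Real.sqrt (s^m + ρ)) := by rw [hgdef]
      rw [hDdef, h11]
      rw [show (m:ℝ) * (s^(m-1) - t^(m-1)) / (2 * Real.sqrt (s^m + ρ))
        = (m:ℝ) * s^(m-1) / (2 * Real.sqrt (s^m + ρ)) - (m:ℝ) * t^(m-1) / (2 * Real.sqrt (s^m + ρ)) by ring]
      linarith
    have step2 : (m:ℝ) * (s^(m-1) - t^(m-1)) / (2 * Real.sqrt (s^m + ρ))
        ≤ (m:ℝ) * (s^(m-1) - t^(m-1)) / (2*r) := by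
      gcongr
      all_goals first
        | exact mul_nonneg (Nat.cast_nonneg m) (by linarith)
        | positivity
        | exact hsrt
    have step3 : s^(m-1) - t^(m-1) ≤ ((m:ℝ)-1) * s^(m-2) * (s-t) := by
      have := aux_pow_sub t s ht hts (m-2)
      have e1 : m - 2 + 1 = m - 1 := by omega
      rw [e1] at this
      have e2 : ((m-2 : ℕ) : ℝ) + 1 = (m:ℝ) - 1 := by
        have : (2:ℕ) ≤ m := by omega
        push_cast [Nat.cast_sub this]
        ring
      rw [e2] at this
      exact this
    have step4 : (m:ℝ) * (s^(m-1) - t^(m-1)) / (2*r)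
        ≤ (m:ℝ) * (((m:ℝ)-1) * s^(m-2) * (s-t)) / (2*r) := by
      gcongr
    linarith
  have epow : s^(m-1) * s^(m-2) = s^m * s^(m-3) := by
    rw [← pow_add, ← pow_add]; congr 1; omega
  have hD2 : D^2 ≤ (m:ℝ)^2 * ((m:ℝ)-1)/4 * s^(m-3) * (s-t) := by
    have hAB : D * D ≤ ((m:ℝ) * s^(m-1) / (2*r)) * ((m:ℝ) * (((m:ℝ)-1) * s^(m-2) * (s-t)) / (2*r)) := by
      apply mul_le_mul hDA hDB hD0
      positivity
    have heq2 : ((m:ℝ) * s^(m-1) / (2*r)) * ((m:ℝ) * (((m:ℝ)-1) * s^(m-2) * (s-t)) / (2*r))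
        = (m:ℝ)^2 * ((m:ℝ)-1) * (s^(m-1) * s^(m-2)) * (s-t) / (4 * (r*r)) := by
      field_simp
      ring
    rw [heq2, hrr, epow] at hAB
    have heq3 : (m:ℝ)^2 * ((m:ℝ)-1) * (s^m * s^(m-3)) * (s-t) / (4 * s^m)
        = (m:ℝ)^2 * ((m:ℝ)-1)/4 * s^(m-3) * (s-t) := by
      field_simp
    rw [heq3] at hAB
    calc D^2 = D * D := pow_two D
      _ ≤ _ := hAB
  -- assemble
  have hm5 : (5:ℝ) ≤ (m:ℝ) := by exact_mod_cast hm
  have hfin1 : (s - t) * (D^2/8) ≤ (s-t) * ((m:ℝ)^2 * ((m:ℝ)-1)/4 * s^(m-3) * (s-t) / 8) := by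
    have h13 : D^2/8 ≤ (m:ℝ)^2 * ((m:ℝ)-1)/4 * s^(m-3) * (s-t) / 8 := by linarith
    exact mul_le_mul_of_nonneg_left h13 (by linarith)
  have hsm3 : (0:ℝ) ≤ s^(m-3) := by positivity
  have hfin2 : (s-t) * ((m:ℝ)^2 * ((m:ℝ)-1)/4 * s^(m-3) * (s-t) / 8)
      ≤ ((m : ℝ) ^ 2 * ((m : ℝ) - 2) / 16) * s ^ (m - 3) * (s - t) ^ 2 := by
    rw [show (s-t) * ((m:ℝ)^2 * ((m:ℝ)-1)/4 * s^(m-3) * (s-t) / 8)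
      = ((m:ℝ)^2 * ((m:ℝ)-1)/32) * s^(m-3) * (s-t)^2 by ring]
    apply mul_le_mul_of_nonneg_right _ (sq_nonneg _)
    apply mul_le_mul_of_nonneg_right _ hsm3
    nlinarith [sq_nonneg (m:ℝ)]
  calc (∫ u in t..s, Real.sqrt (1 + (deriv (fun u : ℝ => Real.sqrt (u^m + ρ)) u) ^ 2))
      - Real.sqrt (Δ^2 + (s-t)^2)
      ≤ ((s - t) * (1/q + D^2/8) + (c/q) * Δ) - ((s - t) * (1/q) + (c/q) * Δ) := by
        rw [hIeq]
        have := hmain.trans_eq hcomp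
        have h12 : Real.sqrt (Δ^2 + (s-t)^2) ≥ (s - t) * (1/q) + (c/q) * Δ := hchord
        linarith
    _ = (s - t) * (D^2/8) := by ring
    _ ≤ ((m : ℝ) ^ 2 * ((m : ℝ) - 2) / 16) * s ^ (m - 3) * (s - t) ^ 2 := hfin1.trans hfin2
end

section
/- There exists ε₀ > 0 such that for every ε ∈ (0, ε₀) and every minimizing extremal (ω, θ, λ) for ε (with ω defined on [0,L]): ω₁(t) ≤ 2·ε^{m̄} and |ω₂(t)| ≤ 2ε for every t ∈ [0,L]. -/
open MeasureTheory

/-- `P(x₁,x₂) = x₁² − x₂^m`. -/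
noncomputable def Pf (m : ℕ) (x : ℝ × ℝ) : ℝ := x.1 ^ 2 - x.2 ^ m

/-- `Q(x₁,x₂) = 4x₁(x₁² − x₂^m)`. -/
noncomputable def Qf (m : ℕ) (x : ℝ × ℝ) : ℝ := 4 * x.1 * (x.1 ^ 2 - x.2 ^ m)

/-- The reference curve `ω̄(t) = (t^{m/2}, t)`; in particular `A_ε = barCurve m ε`. -/
noncomputable def barCurve (m : ℕ) (t : ℝ) : ℝ × ℝ := (t ^ ((m : ℝ) / 2), t)

/-- Euclidean length `∫₀^τ ‖ζ'(t)‖ dt` of a curve with (a.e.) derivative `ζ'`. -/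
noncomputable def eLength (ζ' : ℝ → ℝ × ℝ) (τ : ℝ) : ℝ :=
  ∫ t in (0:ℝ)..τ, Real.sqrt ((ζ' t).1 ^ 2 + (ζ' t).2 ^ 2)

/-- `L(ω̄_ε) = ∫₀^ε √(1 + (m/2)² t^{m−2}) dt`. -/
noncomputable def barLength (m : ℕ) (ε : ℝ) : ℝ :=
  ∫ t in (0:ℝ)..ε, Real.sqrt (1 + ((m : ℝ) / 2) ^ 2 * t ^ (m - 2))

/-- A constrained competitor for `ε`: a Lipschitz curve `ζ : [0,τ] → ℝ²` with a.e. derivative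
`ζ'`, joining `A₀ = (0,0)` to `A_ε = (ε^{m/2}, ε)`, with `∫₀^τ P(ζ(t))² ζ₂'(t) dt = 0`. -/
def IsCompetitor (m : ℕ) (ε τ : ℝ) (ζ ζ' : ℝ → ℝ × ℝ) : Prop :=
  0 ≤ τ ∧
  (∃ K : NNReal, LipschitzOnWith K ζ (Set.Icc 0 τ)) ∧
  ζ 0 = ((0 : ℝ), (0 : ℝ)) ∧
  ζ τ = barCurve m ε ∧
  (∀ᵐ t ∂volume, t ∈ Set.Icc (0:ℝ) τ → HasDerivAt ζ (ζ' t) t) ∧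
  (∫ t in (0:ℝ)..τ, (Pf m (ζ t)) ^ 2 * (ζ' t).2) = 0

/-- A minimizing extremal for `ε`: `(ω, θ, λ)` solving the extremal ODE system on `[0,L]`,
with `ω` a constrained competitor (parametrized by arc length, hence of length `L`),
minimizing the length among all constrained competitors, and whose image differs from
that of `ω̄_ε`. -/
def IsMinExtremal (m : ℕ) (ε L lam : ℝ) (ω : ℝ → ℝ × ℝ) (θ : ℝ → ℝ) : Prop :=
  0 < L ∧
  (∀ t ∈ Set.Icc (0:ℝ) L, HasDerivAt ω (Real.cos (θ t), Real.sin (θ t)) t) ∧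
  (∀ t ∈ Set.Icc (0:ℝ) L, HasDerivAt θ (lam * Qf m (ω t)) t) ∧
  IsCompetitor m ε L ω (fun t => (Real.cos (θ t), Real.sin (θ t))) ∧
  (∀ τ (ζ ζ' : ℝ → ℝ × ℝ), IsCompetitor m ε τ ζ ζ' → L ≤ eLength ζ' τ) ∧
  ω '' Set.Icc (0:ℝ) L ≠ barCurve m '' Set.Icc (0:ℝ) ε

/- ============ auxiliary lemmas ============ -/

lemma aux_sqrt_le (c : ℝ) : Real.sqrt (c ^ 2 + 1 ^ 2) ≤ 1 + c ^ 2 := by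
  have h1 : c ^ 2 + 1 ^ 2 ≤ (1 + c ^ 2) ^ 2 := by nlinarith [sq_nonneg c, sq_nonneg (c^2)]
  calc Real.sqrt (c ^ 2 + 1 ^ 2) ≤ Real.sqrt ((1 + c ^ 2) ^ 2) := Real.sqrt_le_sqrt h1
    _ = 1 + c ^ 2 := Real.sqrt_sq (by positivity)

lemma aux_pow_small (m : ℕ) {x : ℝ} (hm : 1 ≤ m) (hx : 0 ≤ x)
    (hmx : (m : ℝ) * x ≤ 1/6) : (1 + x) ^ m ≤ 6/5 := by
  have hm1 : (1:ℝ) ≤ (m:ℝ) := by exact_mod_cast hm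
  have hx1 : x ≤ 1 := by nlinarith
  have h1 : 1 - (m:ℝ) * x ≤ (1 - x) ^ m := by
    have := one_add_mul_le_pow (a := -x) (by linarith) m
    calc 1 - (m:ℝ)*x = 1 + (m:ℝ)*(-x) := by ring
      _ ≤ (1 + -x)^m := this
      _ = (1-x)^m := by ring_nf
  have h3 : (0:ℝ) ≤ (1 + x) ^ m := by positivity
  have h4 : (1 - (m:ℝ)*x) * (1 + x) ^ m ≤ ((1 - x) * (1 + x)) ^ m := by
    rw [mul_pow]; exact mul_le_mul_of_nonneg_right h1 h3
  have h2 : ((1 - x) * (1 + x)) ^ m ≤ 1 := by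
    apply pow_le_one₀ (by nlinarith) (by nlinarith)
  have h5 : (5/6 : ℝ) * (1 + x) ^ m ≤ (1 - (m:ℝ)*x) * (1 + x)^m :=
    mul_le_mul_of_nonneg_right (by linarith) h3
  linarith

/-- The reference curve is a competitor, with a length bound. -/
lemma bar_comp (m : ℕ) (hm : 5 ≤ m) {ε : ℝ} (hε : 0 < ε) :
    IsCompetitor m ε ε (barCurve m)
      (fun t => (((m:ℝ)/2) * t ^ ((m:ℝ)/2 - 1), (1:ℝ))) ∧
    eLength (fun t => (((m:ℝ)/2) * t ^ ((m:ℝ)/2 - 1), (1:ℝ))) ε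
      ≤ ε + ((m:ℝ)/2)^2 * ε^(m-2) * ε := by
  have hm5 : (5:ℝ) ≤ (m:ℝ) := by exact_mod_cast hm
  set p : ℝ := (m:ℝ)/2 with hp
  have hp1 : 1 ≤ p := by rw [hp]; linarith
  have hp0 : 0 < p := by linarith
  have hDer : ∀ t : ℝ, HasDerivAt (barCurve m) (p * t ^ (p - 1), (1:ℝ)) t := by
    intro t
    have h1 : HasDerivAt (fun x : ℝ => x ^ p) (p * t ^ (p-1)) t :=
      Real.hasDerivAt_rpow_const (Or.inr hp1)
    exact h1.prodMk (hasDerivAt_id t)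
  have hpp : p + p = (m:ℝ) := by rw [hp]; ring
  have hPzero : ∀ t ∈ Set.Icc (0:ℝ) ε, Pf m (barCurve m t) = 0 := by
    intro t ht
    simp only [Pf, barCurve]
    have h2 : (t ^ p) ^ 2 = t ^ (m:ℕ) := by
      rw [sq, ← Real.rpow_add' ht.1 (by rw [hpp]; positivity), hpp, Real.rpow_natCast]
    rw [h2]; ring
  constructor
  · refine ⟨hε.le, ⟨(p * ε ^ (p-1) + 1).toNNReal, ?_⟩, ?_, rfl, ?_, ?_⟩
    · apply Convex.lipschitzOnWith_of_nnnorm_hasDerivWithin_le (convex_Icc _ _)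
        (fun t _ => (hDer t).hasDerivWithinAt)
      intro t ht
      rw [← norm_toNNReal]
      apply Real.toNNReal_mono
      rw [Prod.norm_def]
      have h0 : (0:ℝ) ≤ t ^ (p-1) := Real.rpow_nonneg ht.1 _
      have h1 : t ^ (p-1) ≤ ε ^ (p-1) := Real.rpow_le_rpow ht.1 ht.2 (by linarith)
      have hnn : (0:ℝ) ≤ p * ε ^ (p-1) := by positivity
      have h2 : ‖p * t ^ (p-1)‖ ≤ p * ε ^ (p-1) := by
        rw [Real.norm_eq_abs, abs_of_nonneg (by positivity)]
        exact mul_le_mul_of_nonneg_left h1 hp0.le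
      have h3 : ‖(1:ℝ)‖ = 1 := by norm_num
      exact max_le (by simpa using le_trans h2 (by linarith)) (by simpa using hnn)
    · show barCurve m 0 = _
      simp only [barCurve]
      rw [Real.zero_rpow (ne_of_gt hp0)]
    · exact Filter.Eventually.of_forall (fun t _ => hDer t)
    · rw [intervalIntegral.integral_congr (g := fun _ => (0:ℝ)) ?_,
        intervalIntegral.integral_zero]
      intro t ht
      rw [Set.uIcc_of_le hε.le] at ht
      simp [hPzero t ht]
  · have hcrpow : Continuous fun t : ℝ => t ^ (p-1) := by
      rw [continuous_iff_continuousAt]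
      intro x
      exact Real.continuousAt_rpow_const x (p-1) (Or.inr (by linarith))
    have hcont : Continuous fun t : ℝ => Real.sqrt ((p * t ^ (p-1))^2 + 1^2) :=
      Real.continuous_sqrt.comp (((continuous_const.mul hcrpow).pow 2).add continuous_const)
    have hEm2 : ((m:ℝ) - 2) = ((m - 2 : ℕ) : ℝ) := by
      rw [Nat.cast_sub (by omega : 2 ≤ m)]; norm_num
    have hE : (ε ^ (p-1))^2 = ε ^ (m-2 : ℕ) := by
      rw [sq, ← Real.rpow_add hε, show (p-1)+(p-1) = ((m:ℝ) - 2) by rw [hp]; ring, hEm2,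
        Real.rpow_natCast]
    have key : eLength (fun t => (p * t ^ (p - 1), (1:ℝ))) ε
        ≤ ∫ _ in (0:ℝ)..ε, (1 + p^2 * ε^(m-2)) := by
      unfold eLength
      apply intervalIntegral.integral_mono_on hε.le (by
        apply Continuous.intervalIntegrable
        simpa using hcont) (intervalIntegrable_const)
      intro t ht
      have h0 : (0:ℝ) ≤ t ^ (p-1) := Real.rpow_nonneg ht.1 _
      have h1 : t ^ (p-1) ≤ ε ^ (p-1) := Real.rpow_le_rpow ht.1 ht.2 (by linarith)
      have h2 : (p * t ^ (p-1))^2 ≤ p^2 * ε^(m-2) := by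
        rw [← hE, mul_pow]
        exact mul_le_mul_of_nonneg_left (pow_le_pow_left₀ h0 h1 2) (by positivity)
      calc Real.sqrt ((p * t ^ (p-1))^2 + 1^2) ≤ 1 + (p * t ^ (p-1))^2 := aux_sqrt_le _
        _ ≤ 1 + p^2*ε^(m-2) := by linarith
    rw [intervalIntegral.integral_const] at key
    calc eLength (fun t => (p * t ^ (p - 1), (1:ℝ))) ε ≤ (ε - 0) • (1 + p^2 * ε^(m-2)) := key
      _ = ε + p^2 * ε^(m-2) * ε := by rw [smul_eq_mul]; ring

set_option maxHeartbeats 1000000 in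
/-- for small `ε`, any minimizing extremal satisfies `ω₁ ≤ 2ε^{m/2}` and
`|ω₂| ≤ 2ε` on `[0,L]`. -/
theorem statement6 (m : ℕ) (hodd : Odd m) (hm : 5 ≤ m) :
    ∃ ε₀ > (0:ℝ), ∀ ε ∈ Set.Ioo (0:ℝ) ε₀,
      ∀ (L lam : ℝ) (ω : ℝ → ℝ × ℝ) (θ : ℝ → ℝ), IsMinExtremal m ε L lam ω θ →
        ∀ t ∈ Set.Icc (0:ℝ) L, (ω t).1 ≤ 2 * ε ^ ((m : ℝ) / 2) ∧ |(ω t).2| ≤ 2 * ε := by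
  have hm5 : (5:ℝ) ≤ (m:ℝ) := by exact_mod_cast hm
  have hmpos : (0:ℝ) < (m:ℝ) := by linarith
  refine ⟨(1/(100000*(m:ℝ)^4)) ^ ((1:ℝ)/((m:ℝ)-2)), by positivity, ?_⟩
  intro ε hεmem L lam ω θ hext
  obtain ⟨hε, hεlt⟩ := hεmem
  obtain ⟨hL, hω, hθ, hcomp, hmin, _⟩ := hext
  obtain ⟨-, -, hω0, hωL, -, hconstraint⟩ := hcomp
  set p : ℝ := (m:ℝ)/2 with hp
  have hpp : p + p = (m:ℝ) := by rw [hp]; ring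
  -- smallness of ε
  have hεsmall : 100000*(m:ℝ)^4 * ε^(m-2) < 1 := by
    have hc0 : (0:ℝ) < 1/(100000*(m:ℝ)^4) := by positivity
    have h1 : ε^(m-2) < ((1/(100000*(m:ℝ)^4)) ^ ((1:ℝ)/((m:ℝ)-2)))^(m-2) :=
      pow_lt_pow_left₀ hεlt hε.le (by omega)
    have h2 : ((1/(100000*(m:ℝ)^4)) ^ ((1:ℝ)/((m:ℝ)-2)))^(m-2 : ℕ)
        = 1/(100000*(m:ℝ)^4) := by
      rw [← Real.rpow_natCast ((1/(100000*(m:ℝ)^4)) ^ ((1:ℝ)/((m:ℝ)-2))) (m-2),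
        ← Real.rpow_mul hc0.le]
      rw [Nat.cast_sub (by omega : 2 ≤ m)]
      rw [show (1:ℝ)/((m:ℝ)-2) * ((m:ℝ) - (2:ℕ)) = 1 by
        push_cast
        rw [div_mul_eq_mul_div, one_mul, div_eq_one_iff_eq (by linarith : (m:ℝ)-2 ≠ 0)]]
      exact Real.rpow_one _
    rw [h2] at h1
    rw [lt_div_iff₀ (by positivity)] at h1
    linarith [h1]
  have hεpow_nn : (0:ℝ) ≤ ε^(m-2) := by positivity
  set s : ℝ := (m:ℝ)^2 * ε^(m-1) with hs_def
  have hs : 0 < s := by positivity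
  -- Step A : length bounds
  obtain ⟨hbar, hbarlen⟩ := bar_comp m hm hε
  have hpow_m1 : ε^(m-2)*ε = ε^(m-1) := by
    rw [← pow_succ]; congr 1; omega
  have hLbar : L ≤ ε + p^2 * ε^(m-2) * ε := le_trans (hmin ε _ _ hbar) hbarlen
  have hp2m2 : p^2 ≤ (m:ℝ)^2 := by rw [hp]; nlinarith
  have hLs : L ≤ ε + s := by
    have h1 : p^2 * ε^(m-2) * ε ≤ (m:ℝ)^2 * ε^(m-1) := by
      rw [mul_assoc, hpow_m1]
      exact mul_le_mul_of_nonneg_right hp2m2 (by positivity)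
    rw [hs_def]; linarith
  have hm25 : (25:ℝ) ≤ (m:ℝ)^2 := by nlinarith only [hm5]
  have hm4 : (m:ℝ)^2 ≤ 100000*(m:ℝ)^4 := by
    linarith only [mul_le_mul_of_nonneg_left hm25 (sq_nonneg (m:ℝ)), sq_nonneg (m:ℝ)]
  have hL2ε : L ≤ 2*ε := by
    have h1 : p^2*ε^(m-2) ≤ 1 := by
      have h2 : p^2*ε^(m-2) ≤ 100000*(m:ℝ)^4*ε^(m-2) :=
        mul_le_mul_of_nonneg_right (le_trans hp2m2 hm4) hεpow_nn
      linarith only [h2, hεsmall]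
    linarith only [hLbar, mul_le_mul_of_nonneg_right h1 hε.le, hε]
  -- component derivatives
  have hω1 : ∀ u ∈ Set.Icc (0:ℝ) L, HasDerivAt (fun t => (ω t).1) (Real.cos (θ u)) u := by
    intro u hu
    have h := (ContinuousLinearMap.fst ℝ ℝ ℝ).hasFDerivAt.comp_hasDerivAt u (hω u hu)
    simp at h; exact h
  have hω2 : ∀ u ∈ Set.Icc (0:ℝ) L, HasDerivAt (fun t => (ω t).2) (Real.sin (θ u)) u := by
    intro u hu
    have h := (ContinuousLinearMap.snd ℝ ℝ ℝ).hasFDerivAt.comp_hasDerivAt u (hω u hu)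
    simp at h; exact h
  -- continuity
  have hωcont : ContinuousOn ω (Set.Icc 0 L) :=
    fun u hu => ((hω u hu).continuousAt).continuousWithinAt
  have hθcont : ContinuousOn θ (Set.Icc 0 L) :=
    fun u hu => ((hθ u hu).continuousAt).continuousWithinAt
  have hgcont : ContinuousOn (fun u => Real.sin (θ u)) (Set.Icc 0 L) :=
    Real.continuous_sin.comp_continuousOn hθcont
  have hccont : ContinuousOn (fun u => Real.cos (θ u)) (Set.Icc 0 L) :=
    Real.continuous_cos.comp_continuousOn hθcont
  have hPfc : Continuous fun x : ℝ × ℝ => Pf m x := by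
    unfold Pf; fun_prop
  have hfcont : ContinuousOn (fun u => (Pf m (ω u))^2) (Set.Icc 0 L) :=
    (hPfc.comp_continuousOn hωcont).pow 2
  -- endpoint values
  have hω2_0 : (ω 0).2 = 0 := by rw [hω0]
  have hω2_L : (ω L).2 = ε := by rw [hωL]; rfl
  have hω1_0 : (ω 0).1 = 0 := by rw [hω0]
  have huIcc : Set.uIcc (0:ℝ) L = Set.Icc 0 L := Set.uIcc_of_le hL.le
  -- second coordinate bound
  have habs2 : ∀ u ∈ Set.Icc (0:ℝ) L, |(ω u).2| ≤ L := by
    intro u hu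
    have h := Convex.norm_image_sub_le_of_norm_hasDerivWithin_le
      (f := fun t => (ω t).2) (f' := fun t => Real.sin (θ t)) (s := Set.Icc (0:ℝ) L)
      (fun v hv => (hω2 v hv).hasDerivWithinAt)
      (fun v _ => by rw [Real.norm_eq_abs]; exact Real.abs_sin_le_one (θ v))
      (convex_Icc _ _) (Set.left_mem_Icc.2 hL.le) hu
    have h2 : |(ω u).2| ≤ 1 * |u - 0| := by
      simpa [hω2_0, Real.norm_eq_abs] using h
    have h3 : |u - 0| = u := by rw [sub_zero, abs_of_nonneg hu.1]
    rw [h3] at h2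
    linarith [hu.2]
  -- the two goals
  intro t ht
  refine ⟨?_, by linarith [habs2 t ht]⟩
  by_contra hcon
  push_neg at hcon
  -- `hcon : 2 * ε ^ ((m:ℝ)/2) < (ω t).1`
  -- interval/set integral facts
  have hsin_int : IntervalIntegrable (fun u => Real.sin (θ u)) volume 0 L := by
    apply ContinuousOn.intervalIntegrable; rw [huIcc]; exact hgcont
  have hvert : ∫ u in (0:ℝ)..L, Real.sin (θ u) = ε := by
    rw [intervalIntegral.integral_eq_sub_of_hasDerivAt
      (fun u hu => hω2 u (huIcc ▸ hu)) hsin_int]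
    rw [hω2_L, hω2_0]; ring
  have hIccvert : ∫ u in Set.Icc (0:ℝ) L, Real.sin (θ u) = ε := by
    rw [integral_Icc_eq_integral_Ioc, ← intervalIntegral.integral_of_le hL.le]; exact hvert
  have hconstr : ∫ u in Set.Icc (0:ℝ) L, (Pf m (ω u))^2 * Real.sin (θ u) = 0 := by
    rw [integral_Icc_eq_integral_Ioc, ← intervalIntegral.integral_of_le hL.le]
    simpa using hconstraint
  have hIfin : volume (Set.Icc (0:ℝ) L) ≠ ⊤ := by
    rw [Real.volume_Icc]; exact ENNReal.ofReal_ne_top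
  have hint_one : IntegrableOn (fun _ : ℝ => (1:ℝ)) (Set.Icc (0:ℝ) L) volume := by
    rw [integrableOn_const_iff]; exact Or.inr (lt_top_iff_ne_top.2 hIfin)
  have hint_g : IntegrableOn (fun u => Real.sin (θ u)) (Set.Icc (0:ℝ) L) volume :=
    hgcont.integrableOn_Icc
  have hint_1g : IntegrableOn (fun u => 1 - Real.sin (θ u)) (Set.Icc (0:ℝ) L) volume :=
    (continuousOn_const.sub hgcont).integrableOn_Icc
  have hint_fg : IntegrableOn (fun u => (Pf m (ω u))^2 * Real.sin (θ u))
      (Set.Icc (0:ℝ) L) volume := (hfcont.mul hgcont).integrableOn_Icc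
  have hIccone : ∫ _ in Set.Icc (0:ℝ) L, (1:ℝ) = L := by
    rw [setIntegral_const, smul_eq_mul, mul_one, measureReal_def, Real.volume_Icc,
      ENNReal.toReal_ofReal (by linarith : (0:ℝ) ≤ L - 0)]
    ring
  have hone_sub : ∫ u in Set.Icc (0:ℝ) L, (1 - Real.sin (θ u)) = L - ε := by
    rw [integral_sub hint_one hint_g, hIccone, hIccvert]
  have h1g_nonneg : ∀ u : ℝ, 0 ≤ 1 - Real.sin (θ u) :=
    fun u => by linarith [Real.sin_le_one (θ u)]
  -- clamp and max of |ω₁|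
  set cl : ℝ → ℝ := fun u => max 0 (min u L) with hcl
  have hclmem : ∀ u, cl u ∈ Set.Icc (0:ℝ) L :=
    fun u => ⟨le_max_left _ _, max_le hL.le (min_le_right _ _)⟩
  have hcleq : ∀ u ∈ Set.Icc (0:ℝ) L, cl u = u := by
    intro u hu
    rw [hcl]
    simp only
    rw [min_eq_left hu.2, max_eq_right hu.1]
  have hclcont : Continuous cl := continuous_const.max (continuous_id.min continuous_const)
  set φ : ℝ → ℝ := fun u => |(ω (cl u)).1| with hφ
  have hφcont : Continuous φ := by
    have h1 : Continuous fun u => ω (cl u) := hωcont.comp_continuous hclcont hclmem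
    exact continuous_abs.comp (continuous_fst.comp h1)
  have hφeq : ∀ u ∈ Set.Icc (0:ℝ) L, φ u = |(ω u).1| := by
    intro u hu; rw [hφ]; simp only; rw [hcleq u hu]
  obtain ⟨tN, htN, hmaxN⟩ := isCompact_Icc.exists_isMaxOn (Set.nonempty_Icc.2 hL.le)
    hφcont.continuousOn
  set N : ℝ := φ tN with hNdef
  have hmax' : ∀ u ∈ Set.Icc (0:ℝ) L, |(ω u).1| ≤ N := by
    intro u hu
    rw [← hφeq u hu]
    exact hmaxN hu
  have hεp_pos : 0 < ε ^ p := Real.rpow_pos_of_pos hε _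
  have hNlb : 2*ε^p < N := lt_of_lt_of_le hcon (le_trans (le_abs_self _) (hmax' t ht))
  have hN0 : 0 < N := by linarith
  have hεpm : (ε ^ p)^2 = ε ^ m := by
    rw [sq, ← Real.rpow_add hε, hpp, Real.rpow_natCast]
  have hN2 : 4 * ε^m < N^2 := by
    have h1 : (2*ε^p)^2 < N^2 := pow_lt_pow_left₀ hNlb (by positivity) two_ne_zero
    rw [mul_pow, hεpm] at h1
    norm_num at h1
    linarith
  -- bound on |ω₂|^m
  have hω2m : ∀ u ∈ Set.Icc (0:ℝ) L, |(ω u).2|^m ≤ (6/5) * ε^m := by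
    intro u hu
    have h1 : |(ω u).2|^m ≤ (ε + s)^m :=
      pow_le_pow_left₀ (abs_nonneg _) (le_trans (habs2 u hu) hLs) m
    have hx : ε + s = ε * (1 + (m:ℝ)^2 * ε^(m-2)) := by
      rw [hs_def, ← hpow_m1]; ring
    have hmx : (m:ℝ) * ((m:ℝ)^2 * ε^(m-2)) ≤ 1/6 := by
      have hm3nn : (0:ℝ) ≤ (m:ℝ)^3 := by positivity
      have h7 : 6*(m:ℝ)^3 ≤ 100000*(m:ℝ)^4 := by
        linarith only [mul_le_mul_of_nonneg_left hm5 hm3nn, hm3nn]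
      have h6 : 6*((m:ℝ)*((m:ℝ)^2*ε^(m-2))) ≤ 100000*(m:ℝ)^4*ε^(m-2) := by
        have h8 := mul_le_mul_of_nonneg_right h7 hεpow_nn
        linarith only [h8]
      linarith only [h6, hεsmall]
    have h3 : (1 + (m:ℝ)^2*ε^(m-2))^m ≤ 6/5 :=
      aux_pow_small m (by omega) (by positivity) hmx
    have h4 : (ε + s)^m ≤ (6/5)*ε^m := by
      rw [hx, mul_pow]
      calc ε^m * (1 + (m:ℝ)^2*ε^(m-2))^m ≤ ε^m * (6/5) :=
            mul_le_mul_of_nonneg_left h3 (by positivity)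
        _ = (6/5)*ε^m := by ring
    linarith
  have hω2mN : ∀ u ∈ Set.Icc (0:ℝ) L, |(ω u).2|^m ≤ (3/10) * N^2 := by
    intro u hu; linarith only [hω2m u hu, hN2]
  -- pointwise bounds on f = Pf²
  set A : ℝ := N^4 with hA
  have hA0 : 0 < A := by positivity
  have hfub : ∀ u ∈ Set.Icc (0:ℝ) L, (Pf m (ω u))^2 ≤ 2*A := by
    intro u hu
    have h1 : |(ω u).1| ≤ N := hmax' u hu
    have h2 : |(ω u).2|^m ≤ (3/10)*N^2 := hω2mN u hu
    have hx2 : (ω u).1^2 ≤ N^2 := by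
      nlinarith only [sq_abs ((ω u).1), abs_nonneg ((ω u).1), h1]
    have hym : |((ω u).2)^m| ≤ (3/10)*N^2 := by rw [abs_pow]; exact h2
    obtain ⟨hym1, hym2⟩ := abs_le.mp hym
    have hub : Pf m (ω u) ≤ (13/10)*N^2 := by simp only [Pf]; linarith
    have hlb : -((13/10)*N^2) ≤ Pf m (ω u) := by
      simp only [Pf]; linarith only [sq_nonneg ((ω u).1), hym2, sq_nonneg N]
    have hsq : (Pf m (ω u))^2 ≤ ((13/10)*N^2)^2 := by
      nlinarith only [mul_nonneg (by linarith only [hub] : (0:ℝ) ≤ (13/10)*N^2 - Pf m (ω u))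
        (by linarith only [hlb] : (0:ℝ) ≤ (13/10)*N^2 + Pf m (ω u))]
    rw [hA]
    nlinarith only [hsq, sq_nonneg (N^2), sq_nonneg N]
  -- the band
  set B : Set ℝ := Set.Icc (0:ℝ) L ∩ φ ⁻¹' (Set.Icc ((7/10)*N) ((8/10)*N)) with hB
  have hBclosed : IsClosed B := isClosed_Icc.inter (isClosed_Icc.preimage hφcont)
  have hBmeas : MeasurableSet B := hBclosed.measurableSet
  have hBsub : B ⊆ Set.Icc (0:ℝ) L := Set.inter_subset_left
  have hflb : ∀ u ∈ B, A/30 ≤ (Pf m (ω u))^2 := by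
    intro u hu
    obtain ⟨huI, huφ⟩ := hu
    rw [Set.mem_preimage, hφeq u huI] at huφ
    have h2 : |(ω u).2|^m ≤ (3/10)*N^2 := hω2mN u huI
    have hx2 : (49/100)*N^2 ≤ (ω u).1^2 := by
      nlinarith only [mul_le_mul huφ.1 huφ.1 (by positivity) (abs_nonneg ((ω u).1)),
        sq_abs ((ω u).1)]
    have hym : ((ω u).2)^m ≤ (3/10)*N^2 := by
      calc ((ω u).2)^m ≤ |((ω u).2)^m| := le_abs_self _
        _ = |(ω u).2|^m := abs_pow _ _
        _ ≤ (3/10)*N^2 := h2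
    have hPlb : (19/100)*N^2 ≤ Pf m (ω u) := by
      simp only [Pf]; linarith only [hx2, hym]
    have hnn : (0:ℝ) ≤ (19/100)*N^2 := by positivity
    calc A/30 ≤ ((19/100)*N^2)^2 := by rw [hA]; nlinarith only [sq_nonneg (N^2)]
      _ ≤ (Pf m (ω u))^2 := pow_le_pow_left₀ hnn hPlb 2
  -- measure of the band
  have hBfin : volume B ≠ ⊤ :=
    (lt_of_le_of_lt (measure_mono hBsub) (lt_top_iff_ne_top.2 hIfin)).ne
  set T : ℝ := (volume B).toReal with hT
  have hT0 : 0 ≤ T := ENNReal.toReal_nonneg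
  have hBone : ∫ _ in B, (1:ℝ) = T := by
    rw [setIntegral_const, smul_eq_mul, mul_one, measureReal_def]
  have hint_g_B : IntegrableOn (fun u => Real.sin (θ u)) B volume := hint_g.mono_set hBsub
  have hint_1g_B : IntegrableOn (fun u => 1 - Real.sin (θ u)) B volume :=
    hint_1g.mono_set hBsub
  have hint_fg_B : IntegrableOn (fun u => (Pf m (ω u))^2 * Real.sin (θ u)) B volume :=
    hint_fg.mono_set hBsub
  have hint_1g_D : IntegrableOn (fun u => 1 - Real.sin (θ u)) (Set.Icc (0:ℝ) L \ B) volume :=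
    hint_1g.mono_set Set.diff_subset
  have hint_fg_D : IntegrableOn (fun u => (Pf m (ω u))^2 * Real.sin (θ u))
      (Set.Icc (0:ℝ) L \ B) volume := hint_fg.mono_set Set.diff_subset
  have hint_one_B : IntegrableOn (fun _ : ℝ => (1:ℝ)) B volume := hint_one.mono_set hBsub
  have hsplit : ∀ h : ℝ → ℝ, IntegrableOn h (Set.Icc (0:ℝ) L) volume →
      (∫ u in Set.Icc (0:ℝ) L, h u) = (∫ u in B, h u) + ∫ u in Set.Icc (0:ℝ) L \ B, h u := by
    intro h hh
    rw [← setIntegral_union disjoint_sdiff_self_right (measurableSet_Icc.diff hBmeas)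
      (hh.mono_set hBsub) (hh.mono_set Set.diff_subset), Set.union_diff_cancel hBsub]
  set b1 : ℝ := ∫ u in B, (1 - Real.sin (θ u)) with hb1
  set b2 : ℝ := ∫ u in Set.Icc (0:ℝ) L \ B, (1 - Real.sin (θ u)) with hb2
  have hb12 : b1 + b2 = L - ε := by
    rw [hb1, hb2, ← hsplit _ hint_1g, hone_sub]
  have hb1nn : 0 ≤ b1 := setIntegral_nonneg hBmeas (fun u _ => h1g_nonneg u)
  have hb2nn : 0 ≤ b2 :=
    setIntegral_nonneg (measurableSet_Icc.diff hBmeas) (fun u _ => h1g_nonneg u)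
  have hLε : L - ε ≤ s := by linarith only [hLs]
  have hb1s : b1 ≤ s := by linarith only [hb12, hb2nn, hLε]
  have hBg : ∫ u in B, Real.sin (θ u) = T - b1 := by
    rw [hb1, integral_sub hint_one_B hint_g_B, hBone]
    ring
  -- main exploitation of the constraint : T ≤ 61 s
  have hTle : T ≤ 61*s := by
    have hlow1 : ∫ u in B, ((A/30) * Real.sin (θ u) - 2*A*(1 - Real.sin (θ u)))
        ≤ ∫ u in B, (Pf m (ω u))^2 * Real.sin (θ u) := by
      apply setIntegral_mono_on
        ((hint_g_B.const_mul (A/30)).sub (hint_1g_B.const_mul (2*A))) hint_fg_B hBmeas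
      intro u hu
      simp only [Pi.sub_apply]
      have hf1 : A/30 ≤ (Pf m (ω u))^2 := hflb u hu
      have hf2 : (Pf m (ω u))^2 ≤ 2*A := hfub u (hBsub hu)
      have hg1 : Real.sin (θ u) ≤ 1 := Real.sin_le_one _
      have hg2 : -1 ≤ Real.sin (θ u) := Real.neg_one_le_sin _
      rcases le_or_gt 0 (Real.sin (θ u)) with hg0 | hg0
      · have hp1 : 0 ≤ ((Pf m (ω u))^2 - A/30) * Real.sin (θ u) :=
          mul_nonneg (by linarith only [hf1]) hg0
        have hp2 : 0 ≤ 2*A*(1 - Real.sin (θ u)) :=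
          mul_nonneg (by linarith only [hA0]) (by linarith only [hg1])
        nlinarith only [hp1, hp2]
      · have hp1 : 0 ≤ (2*A - (Pf m (ω u))^2) * (-(Real.sin (θ u))) :=
          mul_nonneg (by linarith only [hf2]) (by linarith only [hg0])
        have hp2 : (A/30)*Real.sin (θ u) ≤ (A/30)*1 :=
          mul_le_mul_of_nonneg_left hg1 (by linarith only [hA0])
        nlinarith only [hp1, hp2, hA0, hg2]
    have hlow2 : ∫ u in Set.Icc (0:ℝ) L \ B, (-(2*A)*(1 - Real.sin (θ u)))
        ≤ ∫ u in Set.Icc (0:ℝ) L \ B, (Pf m (ω u))^2 * Real.sin (θ u) := by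
      apply setIntegral_mono_on (hint_1g_D.const_mul (-(2*A))) hint_fg_D
        (measurableSet_Icc.diff hBmeas)
      intro u hu
      have hf2 : (Pf m (ω u))^2 ≤ 2*A := hfub u hu.1
      have hf0 : 0 ≤ (Pf m (ω u))^2 := sq_nonneg _
      have hg1 : Real.sin (θ u) ≤ 1 := Real.sin_le_one _
      have hg2 : -1 ≤ Real.sin (θ u) := Real.neg_one_le_sin _
      rcases le_or_gt 0 (Real.sin (θ u)) with hg0 | hg0
      · have hp1 : 0 ≤ (Pf m (ω u))^2 * Real.sin (θ u) := mul_nonneg hf0 hg0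
        have hp2 : 0 ≤ 2*A*(1 - Real.sin (θ u)) :=
          mul_nonneg (by linarith only [hA0]) (by linarith only [hg1])
        nlinarith only [hp1, hp2]
      · have hp1 : 0 ≤ (2*A - (Pf m (ω u))^2) * (-(Real.sin (θ u))) :=
          mul_nonneg (by linarith only [hf2]) (by linarith only [hg0])
        nlinarith only [hp1, hA0]
    have hcalc1 : ∫ u in B, ((A/30) * Real.sin (θ u) - 2*A*(1 - Real.sin (θ u)))
        = (A/30)*(T - b1) - 2*A*b1 := by
      rw [integral_sub (hint_g_B.const_mul _) (hint_1g_B.const_mul _),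
        integral_const_mul, integral_const_mul, hBg, ← hb1]
    have hcalc2 : ∫ u in Set.Icc (0:ℝ) L \ B, (-(2*A)*(1 - Real.sin (θ u)))
        = -(2*A)*b2 := by
      rw [integral_const_mul, ← hb2]
    have hzero : (∫ u in B, (Pf m (ω u))^2 * Real.sin (θ u))
        + (∫ u in Set.Icc (0:ℝ) L \ B, (Pf m (ω u))^2 * Real.sin (θ u)) = 0 := by
      rw [← hsplit _ hint_fg]; exact hconstr
    rw [hcalc1] at hlow1
    rw [hcalc2] at hlow2
    have hcomb : (A/30)*(T - b1) - 2*A*b1 - 2*A*b2 ≤ 0 := by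
      linarith only [hlow1, hlow2, hzero]
    have e1 : (A/30)*(T - s) ≤ (A/30)*(T - b1) :=
      mul_le_mul_of_nonneg_left (by linarith only [hb1s]) (by linarith only [hA0])
    have e2 : (2*A)*(b1 + b2) ≤ (2*A)*s :=
      mul_le_mul_of_nonneg_left (by linarith only [hb12, hLε]) (by linarith only [hA0])
    have hcomb2 : (A/30)*(T - s) - 2*A*s ≤ 0 := by nlinarith only [hcomb, e1, e2]
    nlinarith only [hcomb2, hA0]
  -- crossing times
  have htNI : tN ∈ Set.Icc (0:ℝ) L := htN
  have hφ0 : φ 0 = 0 := by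
    rw [hφeq 0 (Set.left_mem_Icc.2 hL.le), hω1_0, abs_zero]
  have hφtN : φ tN = N := rfl
  set S : Set ℝ := Set.Icc 0 tN ∩ φ ⁻¹' (Set.Ici ((8/10)*N)) with hS
  have hSclosed : IsClosed S := isClosed_Icc.inter (isClosed_Ici.preimage hφcont)
  have htNS : tN ∈ S := ⟨⟨htNI.1, le_refl _⟩, by
    rw [Set.mem_preimage, Set.mem_Ici, hφtN]; linarith only [hN0]⟩
  have hSbdd : BddBelow S := ⟨0, fun u hu => hu.1.1⟩
  set t2 : ℝ := sInf S with ht2def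
  have ht2S : t2 ∈ S := hSclosed.csInf_mem ⟨tN, htNS⟩ hSbdd
  have ht2mem : t2 ∈ Set.Icc 0 tN := ht2S.1
  have ht2φ : (8/10)*N ≤ φ t2 := ht2S.2
  have hlt2 : ∀ u ∈ Set.Icc (0:ℝ) tN, u < t2 → φ u < (8/10)*N := by
    intro u hu hut
    by_contra hcontra
    push_neg at hcontra
    exact absurd (csInf_le hSbdd ⟨hu, hcontra⟩) (not_le.2 hut)
  set S' : Set ℝ := Set.Icc 0 t2 ∩ φ ⁻¹' (Set.Iic ((7/10)*N)) with hS'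
  have hS'closed : IsClosed S' := isClosed_Icc.inter (isClosed_Iic.preimage hφcont)
  have h0S' : (0:ℝ) ∈ S' := ⟨⟨le_refl _, ht2mem.1⟩, by
    rw [Set.mem_preimage, Set.mem_Iic, hφ0]; positivity⟩
  have hS'bdd : BddAbove S' := ⟨t2, fun u hu => hu.1.2⟩
  set t1 : ℝ := sSup S' with ht1def
  have ht1S' : t1 ∈ S' := hS'closed.csSup_mem ⟨0, h0S'⟩ hS'bdd
  have ht1mem : t1 ∈ Set.Icc 0 t2 := ht1S'.1
  have ht1φ : φ t1 ≤ (7/10)*N := ht1S'.2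
  have hgt1 : ∀ u ∈ Set.Icc (0:ℝ) t2, t1 < u → (7/10)*N < φ u := by
    intro u hu hut
    by_contra hcontra
    push_neg at hcontra
    exact absurd (le_csSup hS'bdd ⟨hu, hcontra⟩) (not_le.2 hut)
  have ht12 : t1 ≤ t2 := ht1mem.2
  have ht2I : t2 ∈ Set.Icc (0:ℝ) L := ⟨ht2mem.1, le_trans ht2mem.2 htNI.2⟩
  have ht1I : t1 ∈ Set.Icc (0:ℝ) L := ⟨ht1mem.1, le_trans ht1mem.2 ht2I.2⟩
  have hIooB : Set.Ioo t1 t2 ⊆ B := by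
    intro u hu
    have huI : u ∈ Set.Icc (0:ℝ) L :=
      ⟨le_trans ht1I.1 hu.1.le, le_trans hu.2.le ht2I.2⟩
    refine ⟨huI, ?_⟩
    rw [Set.mem_preimage]
    exact ⟨(hgt1 u ⟨huI.1, hu.2.le⟩ hu.1).le,
      (hlt2 u ⟨huI.1, le_trans hu.2.le ht2mem.2⟩ hu.2).le⟩
  have hX : N/10 ≤ |(ω t2).1 - (ω t1).1| := by
    have h1 : N/10 ≤ φ t2 - φ t1 := by linarith only [ht2φ, ht1φ, hN0]
    rw [hφeq t2 ht2I, hφeq t1 ht1I] at h1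
    have h2 := abs_sub_abs_le_abs_sub ((ω t2).1) ((ω t1).1)
    linarith only [h1, h2]
  have hFTC2 : ∫ u in t1..t2, Real.cos (θ u) = (ω t2).1 - (ω t1).1 := by
    apply intervalIntegral.integral_eq_sub_of_hasDerivAt (f := fun u => (ω u).1)
    · intro u hu
      rw [Set.uIcc_of_le ht12] at hu
      exact hω1 u ⟨le_trans ht1I.1 hu.1, le_trans hu.2 ht2I.2⟩
    · apply ContinuousOn.intervalIntegrable
      apply hccont.mono
      rw [Set.uIcc_of_le ht12]
      intro u hu
      exact ⟨le_trans ht1I.1 hu.1, le_trans hu.2 ht2I.2⟩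
  have hint_abs_cos_B : IntegrableOn (fun u => |Real.cos (θ u)|) B volume :=
    hccont.abs.integrableOn_Icc.mono_set hBsub
  have hXB : N/10 ≤ ∫ u in B, |Real.cos (θ u)| := by
    have h1 : |∫ u in t1..t2, Real.cos (θ u)| ≤ ∫ u in t1..t2, |Real.cos (θ u)| :=
      intervalIntegral.abs_integral_le_integral_abs ht12
    have h2 : ∫ u in t1..t2, |Real.cos (θ u)| = ∫ u in Set.Ioo t1 t2, |Real.cos (θ u)| := by
      rw [intervalIntegral.integral_of_le ht12, integral_Ioc_eq_integral_Ioo]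
    have h3 : ∫ u in Set.Ioo t1 t2, |Real.cos (θ u)| ≤ ∫ u in B, |Real.cos (θ u)| :=
      setIntegral_mono_set hint_abs_cos_B
        (Filter.Eventually.of_forall (fun u => abs_nonneg _))
        (HasSubset.Subset.eventuallyLE hIooB)
    rw [hFTC2] at h1
    rw [h2] at h1
    have h4 : N/10 ≤ |(ω t2).1 - (ω t1).1| := hX
    calc N/10 ≤ |(ω t2).1 - (ω t1).1| := h4
      _ ≤ ∫ u in Set.Ioo t1 t2, |Real.cos (θ u)| := h1
      _ ≤ ∫ u in B, |Real.cos (θ u)| := h3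
  -- the AM-GM trick on B
  have hint_cos2_B : IntegrableOn (fun u => (Real.cos (θ u))^2) B volume :=
    ((hccont.pow 2).integrableOn_Icc).mono_set hBsub
  have hcos2B : ∫ u in B, (Real.cos (θ u))^2 ≤ 2*s := by
    have hpt : ∀ u ∈ B, (Real.cos (θ u))^2 ≤ 2*(1 - Real.sin (θ u)) := by
      intro u _
      nlinarith only [Real.sin_sq_add_cos_sq (θ u), Real.sin_le_one (θ u),
        Real.neg_one_le_sin (θ u)]
    have h1 : ∫ u in B, (Real.cos (θ u))^2 ≤ ∫ u in B, 2*(1 - Real.sin (θ u)) :=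
      setIntegral_mono_on hint_cos2_B (hint_1g_B.const_mul 2) hBmeas hpt
    have h2 : ∫ u in B, 2*(1 - Real.sin (θ u)) = 2*b1 := by
      rw [integral_const_mul, ← hb1]
    rw [h2] at h1
    linarith only [h1, hb1s]
  set α : ℝ := 100*s/N with hα
  have hα0 : 0 < α := by rw [hα]; exact div_pos (by linarith only [hs]) hN0
  have hptα : ∀ u ∈ B, |Real.cos (θ u)| ≤ α/2 + (Real.cos (θ u))^2/(2*α) := by
    intro u _
    have h1 : (0:ℝ) ≤ (|Real.cos (θ u)| - α)^2 := sq_nonneg _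
    have h2 : |Real.cos (θ u)|^2 = (Real.cos (θ u))^2 := sq_abs _
    have hαne : α ≠ 0 := ne_of_gt hα0
    have h6 : |Real.cos (θ u)| ≤ ((Real.cos (θ u))^2 + α^2)/(2*α) := by
      rw [le_div_iff₀ (by linarith only [hα0] : (0:ℝ) < 2*α)]
      nlinarith only [h1, h2]
    have h7 : ((Real.cos (θ u))^2 + α^2)/(2*α) = α/2 + (Real.cos (θ u))^2/(2*α) := by
      field_simp
      ring
    linarith only [h6, h7]
  have hintαB : ∫ u in B, (α/2 + (Real.cos (θ u))^2/(2*α))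
      = T*(α/2) + (∫ u in B, (Real.cos (θ u))^2)/(2*α) := by
    rw [integral_add (integrableOn_const (C := α/2) hBfin)
      (hint_cos2_B.div_const _), setIntegral_const, smul_eq_mul, measureReal_def, integral_div]
  have hchain : N/10 ≤ T*(α/2) + (2*s)/(2*α) := by
    have h1 : ∫ u in B, |Real.cos (θ u)| ≤ ∫ u in B, (α/2 + (Real.cos (θ u))^2/(2*α)) := by
      apply setIntegral_mono_on hint_abs_cos_B
        ((integrableOn_const hBfin).add
          (hint_cos2_B.div_const _)) hBmeas hptα
    rw [hintαB] at h1
    have h2 : (∫ u in B, (Real.cos (θ u))^2)/(2*α) ≤ (2*s)/(2*α) :=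
      (div_le_div_iff_of_pos_right (by linarith only [hα0])).mpr hcos2B
    linarith only [hXB, h1, h2]
  -- final arithmetic contradiction
  have hNne : N ≠ 0 := ne_of_gt hN0
  have hsne : s ≠ 0 := ne_of_gt hs
  have he1 : T*(α/2) + (2*s)/(2*α) = 50*s*T/N + N/100 := by
    rw [hα]; field_simp; ring
  rw [he1] at hchain
  have hch3 : N*(N/10) ≤ N*(50*s*T/N + N/100) := mul_le_mul_of_nonneg_left hchain hN0.le
  have he2 : N*(50*s*T/N + N/100) = 50*s*T + N^2/100 := by field_simp
  rw [he2] at hch3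
  have h4 : 50*s*T ≤ 50*s*(61*s) :=
    mul_le_mul_of_nonneg_left hTle (by linarith only [hs])
  have hfinal : N^2 ≤ 40000*s^2 := by nlinarith only [hch3, h4]
  have hs2 : s^2 = (m:ℝ)^4*(ε^(m-2)*ε^m) := by
    have he3 : ε^(m-1)*ε^(m-1) = ε^(m-2)*ε^m := by
      rw [← pow_add, ← pow_add]; congr 1; omega
    calc s^2 = (m:ℝ)^4*(ε^(m-1)*ε^(m-1)) := by rw [hs_def]; ring
      _ = (m:ℝ)^4*(ε^(m-2)*ε^m) := by rw [he3]
  have h5 := mul_lt_mul_of_pos_right hεsmall (pow_pos hε m)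
  have hlast : 40000*s^2 < (2/5)*ε^m := by
    rw [hs2]; nlinarith only [h5]
  linarith only [hfinal, hlast, hN2, pow_pos hε m]
end

section
/- There exist ε₀ > 0 and C > 0 such that for every ε ∈ (0, ε₀) and every minimizing extremal (ω, θ, λ) for ε (with ω defined on [0,L]): max_{t ∈ [0,L]} |P(ω(t))| ≤ C·ε^{(3m−2)/2}. -/
open MeasureTheory

namespace Statement7Aux

open Real Set intervalIntegral

lemma hasDerivAt_fst' {f : ℝ → ℝ × ℝ} {v : ℝ × ℝ} {t : ℝ} (h : HasDerivAt f v t) :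
    HasDerivAt (fun t => (f t).1) v.1 t := by
  simpa using h.hasFDerivAt.fst.hasDerivAt

lemma hasDerivAt_snd' {f : ℝ → ℝ × ℝ} {v : ℝ × ℝ} {t : ℝ} (h : HasDerivAt f v t) :
    HasDerivAt (fun t => (f t).2) v.2 t := by
  simpa using h.hasFDerivAt.snd.hasDerivAt

noncomputable def barDeriv (m : ℕ) (t : ℝ) : ℝ × ℝ := (((m : ℝ) / 2) * t ^ ((m : ℝ) / 2 - 1), 1)

lemma rpow_sq_eq {t : ℝ} (ht : 0 ≤ t) (p : ℝ) : (t ^ p) ^ (2 : ℕ) = t ^ (p * 2) := by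
  rw [← Real.rpow_natCast (t ^ p) 2, ← Real.rpow_mul ht]
  norm_num

lemma hasDerivAt_barCurve (m : ℕ) (hm : 5 ≤ m) (t : ℝ) :
    HasDerivAt (barCurve m) (barDeriv m t) t := by
  have hp : (1:ℝ) ≤ (m : ℝ) / 2 := by
    have : (5:ℝ) ≤ (m : ℝ) := by exact_mod_cast hm
    linarith
  have h1 : HasDerivAt (fun x : ℝ => x ^ ((m:ℝ)/2)) (((m:ℝ)/2) * t ^ ((m:ℝ)/2 - 1)) t :=
    Real.hasDerivAt_rpow_const (Or.inr hp)
  exact h1.prodMk (hasDerivAt_id t)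

lemma Pf_barCurve (m : ℕ) {t : ℝ} (ht : 0 ≤ t) : Pf m (barCurve m t) = 0 := by
  unfold Pf barCurve
  simp only
  have h2 : (t ^ ((m:ℝ)/2)) ^ (2:ℕ) = t ^ ((m:ℝ)/2 * 2) := rpow_sq_eq ht _
  rw [h2, show (m:ℝ)/2 * 2 = (m:ℝ) by ring, Real.rpow_natCast]
  ring

lemma bar_isCompetitor (m : ℕ) (hm : 5 ≤ m) {ε : ℝ} (hε : 0 < ε) (hε1 : ε ≤ 1) :
    IsCompetitor m ε ε (barCurve m) (barDeriv m) := by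
  have hm5 : (5:ℝ) ≤ (m:ℝ) := by exact_mod_cast hm
  refine ⟨hε.le, ?_, ?_, rfl, ?_, ?_⟩
  · refine ⟨(m : NNReal), ?_⟩
    apply (convex_Icc (0:ℝ) ε).lipschitzOnWith_of_nnnorm_hasDerivWithin_le
      (f' := barDeriv m)
      (fun x _ => (hasDerivAt_barCurve m hm x).hasDerivWithinAt)
    intro x hx
    rw [← NNReal.coe_le_coe, coe_nnnorm]
    have hxpow : x ^ ((m:ℝ)/2 - 1) ≤ 1 :=
      Real.rpow_le_one hx.1 (hx.2.trans hε1) (by linarith)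
    have hxpow0 : 0 ≤ x ^ ((m:ℝ)/2 - 1) := Real.rpow_nonneg hx.1 _
    have h1 : |((m:ℝ)/2) * x ^ ((m:ℝ)/2 - 1)| ≤ (m:ℝ) := by
      rw [abs_mul, abs_of_nonneg (by linarith : (0:ℝ) ≤ (m:ℝ)/2), abs_of_nonneg hxpow0]
      nlinarith
    have hnorm : ‖barDeriv m x‖ = max |((m:ℝ)/2) * x ^ ((m:ℝ)/2 - 1)| |(1:ℝ)| := by
      rw [Prod.norm_def]; rfl
    rw [hnorm]
    push_cast
    exact max_le h1 (by simpa using (by linarith : (1:ℝ) ≤ (m:ℝ)))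
  · show barCurve m 0 = _
    unfold barCurve
    rw [Real.zero_rpow (by positivity)]
  · exact Filter.Eventually.of_forall fun t _ => hasDerivAt_barCurve m hm t
  · have hzero : ∀ t ∈ Set.uIcc (0:ℝ) ε, (Pf m (barCurve m t)) ^ 2 * (barDeriv m t).2 = 0 := by
      intro t ht
      rw [Set.uIcc_of_le hε.le] at ht
      rw [Pf_barCurve m ht.1]
      ring
    rw [intervalIntegral.integral_congr hzero, intervalIntegral.integral_zero]

lemma bar_eLength_le (m : ℕ) (hm : 5 ≤ m) {ε : ℝ} (hε : 0 < ε) :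
    eLength (barDeriv m) ε ≤ ε + (m:ℝ)^2 * ε ^ ((m:ℝ) - 1) := by
  have hm5 : (5:ℝ) ≤ (m:ℝ) := by exact_mod_cast hm
  have hpnn : (0:ℝ) ≤ (m:ℝ)/2 - 1 := by linarith
  have hcont1 : Continuous (fun t : ℝ => Real.sqrt ((((m:ℝ)/2) * t ^ ((m:ℝ)/2 - 1)) ^ 2 + 1 ^ 2)) := by
    apply Real.continuous_sqrt.comp
    apply Continuous.add _ continuous_const
    exact ((continuous_const.mul (Real.continuous_rpow_const hpnn)).pow 2)
  have hcont2 : Continuous (fun t : ℝ => 1 + (m:ℝ)^2/8 * t ^ ((m:ℝ) - 2)) := by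
    apply Continuous.add continuous_const
    exact continuous_const.mul (Real.continuous_rpow_const (by linarith))
  have hmono : ∀ t ∈ Set.Icc (0:ℝ) ε,
      Real.sqrt (((barDeriv m t).1) ^ 2 + ((barDeriv m t).2) ^ 2)
        ≤ 1 + (m:ℝ)^2/8 * t ^ ((m:ℝ) - 2) := by
    intro t ht
    have key : (((m:ℝ)/2) * t ^ ((m:ℝ)/2 - 1)) ^ 2 = (m:ℝ)^2/4 * t ^ ((m:ℝ) - 2) := by
      rw [mul_pow]
      rw [show (t ^ ((m:ℝ)/2 - 1)) ^ 2 = (t ^ ((m:ℝ)/2 - 1)) ^ (2:ℕ) by norm_num,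
        rpow_sq_eq ht.1, show ((m:ℝ)/2 - 1) * 2 = (m:ℝ) - 2 by ring]
      ring
    have h1 : Real.sqrt ((((m:ℝ)/2) * t ^ ((m:ℝ)/2 - 1)) ^ 2 + 1 ^ 2)
        ≤ 1 + (((m:ℝ)/2) * t ^ ((m:ℝ)/2 - 1)) ^ 2 / 2 := by
      have h1' : (((m:ℝ)/2) * t ^ ((m:ℝ)/2 - 1)) ^ 2 + 1 ^ 2
          ≤ (1 + (((m:ℝ)/2) * t ^ ((m:ℝ)/2 - 1)) ^ 2 / 2) ^ 2 := by
        nlinarith [sq_nonneg ((((m:ℝ)/2) * t ^ ((m:ℝ)/2 - 1)) ^ 2)]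
      calc Real.sqrt _ ≤ Real.sqrt ((1 + (((m:ℝ)/2) * t ^ ((m:ℝ)/2 - 1)) ^ 2 / 2) ^ 2) :=
            Real.sqrt_le_sqrt h1'
      _ = _ := Real.sqrt_sq (by positivity)
    unfold barDeriv
    simp only
    calc Real.sqrt ((((m:ℝ)/2) * t ^ ((m:ℝ)/2 - 1)) ^ 2 + 1 ^ 2)
        ≤ 1 + (((m:ℝ)/2) * t ^ ((m:ℝ)/2 - 1)) ^ 2 / 2 := h1
      _ = 1 + (m:ℝ)^2/8 * t ^ ((m:ℝ) - 2) := by rw [key]; ring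
  have hint2 : ∫ t in (0:ℝ)..ε, (1 + (m:ℝ)^2/8 * t ^ ((m:ℝ) - 2))
      = ε + (m:ℝ)^2/8 * (ε ^ ((m:ℝ) - 1) / ((m:ℝ) - 1)) := by
    rw [intervalIntegral.integral_add (g := fun t : ℝ => (m:ℝ)^2/8 * t ^ ((m:ℝ) - 2)) (intervalIntegrable_const)
      ((continuous_const.mul (Real.continuous_rpow_const (by linarith : (0:ℝ) ≤ (m:ℝ) - 2))).intervalIntegrable 0 ε),
      intervalIntegral.integral_const_mul, integral_rpow (Or.inl (by linarith))]
    rw [Real.zero_rpow (by linarith : (m:ℝ) - 2 + 1 ≠ 0)]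
    simp only [sub_zero, integral_one, sub_zero]
    ring_nf
  have hle : eLength (barDeriv m) ε ≤ ε + (m:ℝ)^2/8 * (ε ^ ((m:ℝ) - 1) / ((m:ℝ) - 1)) := by
    rw [← hint2]
    unfold eLength
    apply intervalIntegral.integral_mono_on hε.le
      (hcont1.intervalIntegrable 0 ε) (hcont2.intervalIntegrable 0 ε) hmono
  have hfinal : (m:ℝ)^2/8 * (ε ^ ((m:ℝ) - 1) / ((m:ℝ) - 1)) ≤ (m:ℝ)^2 * ε ^ ((m:ℝ) - 1) := by
    have hεp : (0:ℝ) ≤ ε ^ ((m:ℝ) - 1) := Real.rpow_nonneg hε.le _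
    rw [div_mul_eq_mul_div, mul_div_assoc]
    have : ε ^ ((m:ℝ) - 1) / ((m:ℝ) - 1) ≤ ε ^ ((m:ℝ) - 1) :=
      div_le_self hεp (by linarith)
    nlinarith
  linarith

end Statement7Aux

set_option maxHeartbeats 2000000 in
open Statement7Aux in
/-- for small `ε`, any minimizing extremal satisfies
`max_{[0,L]} |P ∘ ω| ≤ C ε^{(3m−2)/2}`. -/
theorem statement7 (m : ℕ) (hodd : Odd m) (hm : 5 ≤ m) :
    ∃ ε₀ > (0:ℝ), ∃ C > (0:ℝ), ∀ ε ∈ Set.Ioo (0:ℝ) ε₀,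
      ∀ (L lam : ℝ) (ω : ℝ → ℝ × ℝ) (θ : ℝ → ℝ), IsMinExtremal m ε L lam ω θ →
        ∀ t ∈ Set.Icc (0:ℝ) L, |Pf m (ω t)| ≤ C * ε ^ ((3 * (m : ℝ) - 2) / 2) := by
  have hm5 : (5:ℝ) ≤ (m:ℝ) := by exact_mod_cast hm
  have hmpos : (0:ℝ) < (m:ℝ) := by linarith
  refine ⟨((m:ℝ)^2 * 2^m)⁻¹, by positivity,
    8*(2*((m:ℝ)^2+1)+1)*(m:ℝ)^2, by positivity, ?_⟩
  rintro ε ⟨hε, hεlt⟩ L lam ω θ hext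
  set C₁ : ℝ := (m:ℝ)^2 with hC₁def
  set K : ℝ := 2*(C₁+1)+1 with hKdef
  have hC₁pos : 0 < C₁ := by rw [hC₁def]; positivity
  have hKpos : 0 < K := by rw [hKdef]; linarith
  obtain ⟨hL, hω, hθ, hcomp, hmin, -⟩ := hext
  obtain ⟨-, -, hω0, hωL, -, hconstraint⟩ := hcomp
  -- smallness of ε
  have h2mpos : (0:ℝ) < 2^m := by positivity
  have h2m1 : (1:ℝ) ≤ 2^m := one_le_pow₀ (by norm_num)
  have hε₀le1 : ((m:ℝ)^2 * 2^m)⁻¹ ≤ 1 := by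
    rw [inv_le_one_iff₀]
    right; nlinarith
  have hε1 : ε ≤ 1 := hεlt.le.trans hε₀le1
  -- continuity facts
  have hθcont : ContinuousOn θ (Set.Icc 0 L) :=
    fun x hx => (hθ x hx).continuousAt.continuousWithinAt
  have hscont : ContinuousOn (fun t => Real.sin (θ t)) (Set.Icc 0 L) :=
    Real.continuous_sin.comp_continuousOn hθcont
  have hccont : ContinuousOn (fun t => Real.cos (θ t)) (Set.Icc 0 L) :=
    Real.continuous_cos.comp_continuousOn hθcont
  -- FTC for the coordinates of ω
  have hftc1 : ∀ x ∈ Set.Icc (0:ℝ) L, ∫ t in (0:ℝ)..x, Real.cos (θ t) = (ω x).1 := by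
    intro x hx
    have hsub : Set.Icc (0:ℝ) x ⊆ Set.Icc 0 L := Set.Icc_subset_Icc le_rfl hx.2
    have hsub' : Set.uIcc (0:ℝ) x ⊆ Set.Icc 0 L := by
      rw [Set.uIcc_of_le hx.1]; exact hsub
    rw [intervalIntegral.integral_eq_sub_of_hasDerivAt
      (fun s hs => hasDerivAt_fst' (hω s (hsub' hs)))
      ((hccont.mono hsub).intervalIntegrable_of_Icc hx.1), hω0]
    simp
  have hftc2 : ∀ x ∈ Set.Icc (0:ℝ) L, ∫ t in (0:ℝ)..x, Real.sin (θ t) = (ω x).2 := by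
    intro x hx
    have hsub : Set.Icc (0:ℝ) x ⊆ Set.Icc 0 L := Set.Icc_subset_Icc le_rfl hx.2
    have hsub' : Set.uIcc (0:ℝ) x ⊆ Set.Icc 0 L := by
      rw [Set.uIcc_of_le hx.1]; exact hsub
    rw [intervalIntegral.integral_eq_sub_of_hasDerivAt
      (fun s hs => hasDerivAt_snd' (hω s (hsub' hs)))
      ((hscont.mono hsub).intervalIntegrable_of_Icc hx.1), hω0]
    simp
  have hintsinL : ∫ t in (0:ℝ)..L, Real.sin (θ t) = ε := by
    rw [hftc2 L ⟨hL.le, le_rfl⟩, hωL]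
    rfl
  -- ε ≤ L
  have hLε : ε ≤ L := by
    have h1 : ∫ t in (0:ℝ)..L, Real.sin (θ t) ≤ ∫ t in (0:ℝ)..L, (1:ℝ) :=
      intervalIntegral.integral_mono_on hL.le (hscont.intervalIntegrable_of_Icc hL.le)
        intervalIntegrable_const (fun x _ => Real.sin_le_one _)
    rw [hintsinL] at h1
    simpa using h1
  -- minimality: L − ε is small
  have hD : L - ε ≤ C₁ * ε ^ ((m:ℝ)-1) := by
    have h1 := hmin ε (barCurve m) (barDeriv m) (bar_isCompetitor m hm hε hε1)
    have h2 := bar_eLength_le m hm hε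
    rw [hC₁def]
    linarith
  -- powers of ε
  set σ : ℝ := ε ^ (((m:ℝ)-2)/2) with hσdef
  set μ : ℝ := ε ^ ((m:ℝ)/2) with hμdef
  have hσpos : 0 < σ := Real.rpow_pos_of_pos hε _
  have hμpos : 0 < μ := Real.rpow_pos_of_pos hε _
  have hσμ : σ * μ = ε ^ ((m:ℝ)-1) := by
    rw [hσdef, hμdef, ← Real.rpow_add hε]
    congr 1; ring
  have hσε : σ ≤ ε := by
    have := Real.rpow_le_rpow_of_exponent_ge hε hε1 (by linarith : (1:ℝ) ≤ ((m:ℝ)-2)/2)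
    rw [Real.rpow_one] at this
    rw [hσdef]; exact this
  have hεm2le : ε ^ ((m:ℝ)-2) ≤ ε := by
    have := Real.rpow_le_rpow_of_exponent_ge hε hε1 (by linarith : (1:ℝ) ≤ (m:ℝ)-2)
    rwa [Real.rpow_one] at this
  have hεsmall : C₁ * ε ≤ 1 := by
    have h1 : C₁ * ε ≤ C₁ * ((m:ℝ)^2 * 2^m)⁻¹ :=
      mul_le_mul_of_nonneg_left hεlt.le hC₁pos.le
    have h2 : C₁ * ((m:ℝ)^2 * 2^m)⁻¹ = (2^m)⁻¹ := by
      rw [hC₁def]; field_simp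
    have h3 : ((2:ℝ)^m)⁻¹ ≤ 1 := by
      rw [inv_le_one_iff₀]; right; exact h2m1
    linarith
  have hL2ε : L ≤ 2*ε := by
    have h1 : ε ^ ((m:ℝ)-1) = ε ^ ((m:ℝ)-2) * ε := by
      rw [show (m:ℝ)-1 = ((m:ℝ)-2) + 1 by ring, Real.rpow_add hε, Real.rpow_one]
    have h2 : C₁ * ε ^ ((m:ℝ)-1) ≤ ε := by
      rw [h1]
      calc C₁ * (ε ^ ((m:ℝ)-2) * ε) ≤ C₁ * (ε * ε) :=
            mul_le_mul_of_nonneg_left (mul_le_mul_of_nonneg_right hεm2le hε.le) hC₁pos.le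
      _ = (C₁ * ε) * ε := by ring
      _ ≤ 1 * ε := by nlinarith
      _ = ε := one_mul ε
    linarith
  -- key: m (2ε)^(m−1) ≤ μ
  have hm2K : (m:ℝ) * (2*ε)^(m-1) ≤ μ := by
    have hcast : ((m - 1 : ℕ) : ℝ) = (m:ℝ) - 1 := by
      have : (1:ℕ) ≤ m := by omega
      push_cast [Nat.cast_sub this]
      ring
    have h1 : (2*ε)^(m-1) = 2^(m-1) * ε ^ ((m:ℝ)-1) := by
      rw [mul_pow, ← Real.rpow_natCast ε (m-1), hcast]
    have h2 : (2:ℝ)^m = 2 * 2^(m-1) := by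
      rw [← pow_succ']
      congr 1
      omega
    have h3 : (m:ℝ) * 2^(m-1) * σ ≤ 1 := by
      have h2m1pos : (0:ℝ) < 2^(m-1) := by positivity
      have hσε₀ : σ ≤ ((m:ℝ)^2 * 2^m)⁻¹ := hσε.trans hεlt.le
      have h4 : (m:ℝ) * 2^(m-1) * ((m:ℝ)^2 * 2^m)⁻¹ ≤ 1 := by
        rw [h2]
        rw [mul_inv_le_iff₀ (by positivity)]
        have h5 : (m:ℝ) ≤ 2*(m:ℝ)^2 := by nlinarith
        nlinarith [mul_le_mul_of_nonneg_right h5 h2m1pos.le]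
      calc (m:ℝ) * 2^(m-1) * σ ≤ (m:ℝ) * 2^(m-1) * ((m:ℝ)^2 * 2^m)⁻¹ := by
            apply mul_le_mul_of_nonneg_left hσε₀ (by positivity)
      _ ≤ 1 := h4
    calc (m:ℝ) * (2*ε)^(m-1) = ((m:ℝ) * 2^(m-1) * σ) * μ := by rw [h1, ← hσμ]; ring
    _ ≤ 1 * μ := mul_le_mul_of_nonneg_right h3 hμpos.le
    _ = μ := one_mul μ
  -- pointwise bound on |cos θ|
  have habs : ∀ x : ℝ, |Real.cos (θ x)| ≤ σ⁻¹ * (1 - Real.sin (θ x)) + σ/2 := by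
    intro x
    have hpyth := Real.sin_sq_add_cos_sq (θ x)
    have hs1 := Real.sin_le_one (θ x)
    have h2 := sq_nonneg (|Real.cos (θ x)| - σ)
    have h3 : |Real.cos (θ x)|^2 = Real.cos (θ x)^2 := sq_abs _
    have h4 : 2*σ*|Real.cos (θ x)| ≤ 2*(1 - Real.sin (θ x)) + σ^2 := by nlinarith
    have h5 : |Real.cos (θ x)| = (2*σ*|Real.cos (θ x)|)/(2*σ) := by
      field_simp
    rw [h5]
    rw [div_le_iff₀ (by positivity)]
    have h6 : (σ⁻¹ * (1 - Real.sin (θ x)) + σ/2) * (2*σ) = 2*(1 - Real.sin (θ x)) + σ^2 := by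
      field_simp
    rw [h6]
    exact h4
  -- integral bound on |cos θ|
  have hintcos : ∫ t in (0:ℝ)..L, |Real.cos (θ t)| ≤ (C₁+1)*μ := by
    have hint1 : ∫ t in (0:ℝ)..L, (σ⁻¹ * (1 - Real.sin (θ t)) + σ/2)
        = σ⁻¹ * (L - ε) + σ/2*L := by
      rw [intervalIntegral.integral_add
        (((intervalIntegrable_const).sub (hscont.intervalIntegrable_of_Icc hL.le)).const_mul _)
        intervalIntegrable_const,
        intervalIntegral.integral_const_mul,
        intervalIntegral.integral_sub intervalIntegrable_const
          (hscont.intervalIntegrable_of_Icc hL.le),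
        hintsinL]
      simp
      ring
    have h2 : ∫ t in (0:ℝ)..L, |Real.cos (θ t)| ≤ ∫ t in (0:ℝ)..L, (σ⁻¹ * (1 - Real.sin (θ t)) + σ/2) :=
      intervalIntegral.integral_mono_on hL.le
        ((hccont.abs).intervalIntegrable_of_Icc hL.le)
        ((((intervalIntegrable_const).sub (hscont.intervalIntegrable_of_Icc hL.le)).const_mul _).add
          intervalIntegrable_const)
        (fun x _ => habs x)
    have h3 : σ⁻¹ * (L - ε) ≤ C₁*μ := by
      rw [← hσμ] at hD
      rw [inv_mul_le_iff₀ hσpos]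
      calc L - ε ≤ C₁ * (σ * μ) := hD
      _ = σ * (C₁ * μ) := by ring
    have h4 : σ/2*L ≤ μ := by
      have hσε2 : σ * ε = μ := by
        rw [hσdef, hμdef, ← Real.rpow_add_one hε.ne']
        congr 1; ring
      calc σ/2*L ≤ σ/2*(2*ε) :=
            mul_le_mul_of_nonneg_left hL2ε (by positivity : (0:ℝ) ≤ σ/2)
      _ = σ * ε := by ring
      _ = μ := hσε2
    calc ∫ t in (0:ℝ)..L, |Real.cos (θ t)| ≤ σ⁻¹ * (L - ε) + σ/2*L := by rw [← hint1]; exact h2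
    _ ≤ C₁*μ + μ := by linarith
    _ = (C₁+1)*μ := by ring
  -- bounds on ω
  have hω1bound : ∀ x ∈ Set.Icc (0:ℝ) L, |(ω x).1| ≤ (C₁+1)*μ := by
    intro x hx
    have hsub : Set.Icc (0:ℝ) x ⊆ Set.Icc 0 L := Set.Icc_subset_Icc le_rfl hx.2
    have hsub2 : Set.Icc x L ⊆ Set.Icc 0 L := Set.Icc_subset_Icc hx.1 le_rfl
    rw [← hftc1 x hx]
    calc |∫ t in (0:ℝ)..x, Real.cos (θ t)| ≤ ∫ t in (0:ℝ)..x, |Real.cos (θ t)| :=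
          intervalIntegral.abs_integral_le_integral_abs hx.1
    _ ≤ ∫ t in (0:ℝ)..L, |Real.cos (θ t)| := by
        have hadd : (∫ t in (0:ℝ)..x, |Real.cos (θ t)|) + ∫ t in x..L, |Real.cos (θ t)|
            = ∫ t in (0:ℝ)..L, |Real.cos (θ t)| :=
          intervalIntegral.integral_add_adjacent_intervals
            ((hccont.abs.mono hsub).intervalIntegrable_of_Icc hx.1)
            ((hccont.abs.mono hsub2).intervalIntegrable_of_Icc hx.2)
        have hnn : 0 ≤ ∫ t in x..L, |Real.cos (θ t)| :=
          intervalIntegral.integral_nonneg hx.2 (fun u _ => abs_nonneg _)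
        linarith
    _ ≤ (C₁+1)*μ := hintcos
  have hω2bound : ∀ x ∈ Set.Icc (0:ℝ) L, |(ω x).2| ≤ 2*ε := by
    intro x hx
    have hsub : Set.Icc (0:ℝ) x ⊆ Set.Icc 0 L := Set.Icc_subset_Icc le_rfl hx.2
    rw [← hftc2 x hx]
    calc |∫ t in (0:ℝ)..x, Real.sin (θ t)| ≤ ∫ t in (0:ℝ)..x, |Real.sin (θ t)| :=
          intervalIntegral.abs_integral_le_integral_abs hx.1
    _ ≤ ∫ t in (0:ℝ)..x, (1:ℝ) :=
        intervalIntegral.integral_mono_on hx.1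
          (((hscont.mono hsub).abs).intervalIntegrable_of_Icc hx.1)
          intervalIntegrable_const (fun u _ => Real.abs_sin_le_one _)
    _ = x := by simp
    _ ≤ 2*ε := by linarith [hx.2]
  -- derivative of P ∘ ω
  set h' : ℝ → ℝ :=
    fun x => 2*(ω x).1*Real.cos (θ x) - (m:ℝ)*(ω x).2^(m-1)*Real.sin (θ x) with hh'def
  have hPderiv : ∀ x ∈ Set.Icc (0:ℝ) L, HasDerivAt (fun t => Pf m (ω t)) (h' x) x := by
    intro x hx
    have h1 := (hasDerivAt_fst' (hω x hx)).pow 2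
    have h2 := (hasDerivAt_snd' (hω x hx)).pow m
    have h3 := h1.sub h2
    simp only at h3
    have heq : (fun t => Pf m (ω t)) = fun t => (ω t).1 ^ 2 - (ω t).2 ^ m := by
      funext t; rfl
    rw [heq, hh'def]
    exact h3.congr_deriv (by norm_num)
  have hcontP : ContinuousOn (fun t => Pf m (ω t)) (Set.Icc 0 L) :=
    fun x hx => (hPderiv x hx).continuousAt.continuousWithinAt
  have hcontP2 : ContinuousOn (fun t => (Pf m (ω t))^2) (Set.Icc 0 L) := hcontP.pow 2
  -- bound on (P∘ω)'
  have hh'bound : ∀ x ∈ Set.Icc (0:ℝ) L, |h' x| ≤ K*μ := by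
    intro x hx
    have hc1 : |Real.cos (θ x)| ≤ 1 := Real.abs_cos_le_one _
    have hs1 : |Real.sin (θ x)| ≤ 1 := Real.abs_sin_le_one _
    have hA := hω1bound x hx
    have hB := hω2bound x hx
    have b1 : |2*(ω x).1*Real.cos (θ x)| ≤ 2*((C₁+1)*μ) := by
      rw [abs_mul, abs_mul, abs_two]
      have := abs_nonneg (ω x).1
      have := abs_nonneg (Real.cos (θ x))
      nlinarith
    have b2 : |(m:ℝ)*(ω x).2^(m-1)*Real.sin (θ x)| ≤ (m:ℝ)*(2*ε)^(m-1) := by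
      rw [abs_mul, abs_mul, abs_pow, abs_of_nonneg hmpos.le]
      have hp1 : |(ω x).2|^(m-1) ≤ (2*ε)^(m-1) := pow_le_pow_left₀ (abs_nonneg _) hB (m-1)
      calc (m:ℝ) * |(ω x).2|^(m-1) * |Real.sin (θ x)| ≤ (m:ℝ) * (2*ε)^(m-1) * 1 := by
            apply mul_le_mul (mul_le_mul_of_nonneg_left hp1 hmpos.le) hs1 (abs_nonneg _)
              (by positivity)
      _ = (m:ℝ) * (2*ε)^(m-1) := mul_one _
    have habs2 : |h' x| ≤ |2*(ω x).1*Real.cos (θ x)| + |(m:ℝ)*(ω x).2^(m-1)*Real.sin (θ x)| := by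
      rw [hh'def]
      simp only [sub_eq_add_neg]
      exact (abs_add_le _ _).trans (by rw [abs_neg])
    have : K*μ = 2*((C₁+1)*μ) + μ := by rw [hKdef]; ring
    rw [this]
    linarith [hm2K]
  -- MVT-type estimate for P ∘ ω
  have hMVT : ∀ x ∈ Set.Icc (0:ℝ) L, ∀ y ∈ Set.Icc (0:ℝ) L,
      |Pf m (ω y) - Pf m (ω x)| ≤ K*μ*|y - x| := by
    intro x hx y hy
    have := Convex.norm_image_sub_le_of_norm_hasDerivWithin_le (f' := h')
      (fun z hz => (hPderiv z hz).hasDerivWithinAt)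
      (fun z hz => by simpa [Real.norm_eq_abs] using hh'bound z hz)
      (convex_Icc 0 L) hx hy
    simpa [Real.norm_eq_abs] using this
  -- the maximum of |P ∘ ω|
  obtain ⟨ts, hts, hmax⟩ := isCompact_Icc.exists_isMaxOn (Set.nonempty_Icc.mpr hL.le)
    (hcontP.abs)
  have hmaxle : ∀ x ∈ Set.Icc (0:ℝ) L, |Pf m (ω x)| ≤ |Pf m (ω ts)| := fun x hx => hmax hx
  set M : ℝ := |Pf m (ω ts)| with hMdef
  intro t ht
  have hgoal1 : |Pf m (ω t)| ≤ M := hmaxle t ht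
  suffices hMle : M ≤ 8*K*C₁ * ε ^ ((3*(m:ℝ)-2)/2) by linarith
  have hP0 : Pf m (ω 0) = 0 := by
    rw [hω0]
    unfold Pf
    simp only
    rw [zero_pow (by omega : m ≠ 0)]
    norm_num
  rcases (abs_nonneg (Pf m (ω ts))).eq_or_lt with hM0 | hMpos
  · rw [← hMdef] at hM0
    rw [← hM0]
    positivity
  · rw [← hMdef] at hMpos
    set r : ℝ := M/(2*K*μ) with hrdef
    have hrpos : 0 < r := by rw [hrdef]; positivity
    have htsM : M ≤ K*μ*ts := by
      have h1 := hMVT 0 ⟨le_rfl, hL.le⟩ ts hts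
      rw [hP0, sub_zero, sub_zero, abs_of_nonneg hts.1] at h1
      exact h1
    have h2r : 2*r ≤ ts := by
      rw [hrdef]
      rw [show 2*(M/(2*K*μ)) = M/(K*μ) by field_simp]
      rw [div_le_iff₀ (by positivity)]
      linarith [htsM]
    have hsubI : Set.Icc (ts - r) ts ⊆ Set.Icc (0:ℝ) L := by
      intro s hs
      exact ⟨by linarith [hs.1], hs.2.trans hts.2⟩
    have hlow : ∀ s ∈ Set.Icc (ts - r) ts, (M/2)^2 ≤ (Pf m (ω s))^2 := by
      intro s hs
      have hsmem := hsubI hs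
      have hd := hMVT s hsmem ts hts
      have h1 : |ts - s| ≤ r := by
        rw [abs_of_nonneg (by linarith [hs.2])]
        linarith [hs.1]
      have h2 : |Pf m (ω ts) - Pf m (ω s)| ≤ K*μ*r := by
        calc |Pf m (ω ts) - Pf m (ω s)| ≤ K*μ*|ts - s| := hd
        _ ≤ K*μ*r := by nlinarith [mul_pos hKpos hμpos]
      have hKμr : K*μ*r = M/2 := by
        rw [hrdef]
        field_simp
      have h3 : M/2 ≤ |Pf m (ω s)| := by
        have h4 := abs_sub_abs_le_abs_sub (Pf m (ω ts)) (Pf m (ω s))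
        rw [← hMdef] at h4
        rw [hKμr] at h2
        linarith
      calc (M/2)^2 ≤ |Pf m (ω s)|^2 := pow_le_pow_left₀ (by positivity) h3 2
      _ = (Pf m (ω s))^2 := sq_abs _
    have hintlow : (M/2)^2 * r ≤ ∫ s in (ts - r)..ts, (Pf m (ω s))^2 := by
      have h1 : ∫ s in (ts-r)..ts, ((M/2)^2 : ℝ) = (M/2)^2 * r := by
        rw [intervalIntegral.integral_const]
        rw [smul_eq_mul]
        ring
      rw [← h1]
      exact intervalIntegral.integral_mono_on (by linarith) intervalIntegrable_const
        ((hcontP2.mono hsubI).intervalIntegrable_of_Icc (by linarith)) hlow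
    have hsplit : ∫ s in (ts - r)..ts, (Pf m (ω s))^2 ≤ ∫ s in (0:ℝ)..L, (Pf m (ω s))^2 := by
      apply intervalIntegral.integral_mono_interval (by linarith [h2r, hrpos] : (0:ℝ) ≤ ts - r)
        (by linarith) hts.2
      · exact Filter.Eventually.of_forall (fun s => sq_nonneg _)
      · exact hcontP2.intervalIntegrable_of_Icc hL.le
    have hconstraint' : ∫ s in (0:ℝ)..L, (Pf m (ω s))^2 * Real.sin (θ s) = 0 := by
      simpa using hconstraint
    have hup : ∫ s in (0:ℝ)..L, (Pf m (ω s))^2 ≤ M^2 * (L - ε) := by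
      have hint_a : IntervalIntegrable (fun s => (Pf m (ω s))^2 * (1 - Real.sin (θ s))) volume 0 L :=
        (hcontP2.mul (continuousOn_const.sub hscont)).intervalIntegrable_of_Icc hL.le
      have hint_b : IntervalIntegrable (fun s => (Pf m (ω s))^2 * Real.sin (θ s)) volume 0 L :=
        (hcontP2.mul hscont).intervalIntegrable_of_Icc hL.le
      have e1 : ∫ s in (0:ℝ)..L, (Pf m (ω s))^2
          = ∫ s in (0:ℝ)..L, ((Pf m (ω s))^2 * (1 - Real.sin (θ s)) + (Pf m (ω s))^2 * Real.sin (θ s)) := by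
        apply intervalIntegral.integral_congr
        intro s _
        ring
      rw [e1, intervalIntegral.integral_add hint_a hint_b, hconstraint', add_zero]
      have e2 : ∫ s in (0:ℝ)..L, (Pf m (ω s))^2 * (1 - Real.sin (θ s))
          ≤ ∫ s in (0:ℝ)..L, M^2 * (1 - Real.sin (θ s)) := by
        apply intervalIntegral.integral_mono_on hL.le hint_a
          (((intervalIntegrable_const).sub (hscont.intervalIntegrable_of_Icc hL.le)).const_mul _)
        intro x hx
        have h1 : 0 ≤ 1 - Real.sin (θ x) := by linarith [Real.sin_le_one (θ x)]
        have h2 : (Pf m (ω x))^2 ≤ M^2 := by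
          have h3 := hmaxle x hx
          calc (Pf m (ω x))^2 = |Pf m (ω x)|^2 := (sq_abs _).symm
          _ ≤ M^2 := pow_le_pow_left₀ (abs_nonneg _) h3 2
        nlinarith
      have e3 : ∫ s in (0:ℝ)..L, M^2 * (1 - Real.sin (θ s)) = M^2 * (L - ε) := by
        rw [intervalIntegral.integral_const_mul,
          intervalIntegral.integral_sub intervalIntegrable_const
            (hscont.intervalIntegrable_of_Icc hL.le), hintsinL]
        simp
      linarith
    have hfinal1 : (M/2)^2 * r ≤ M^2 * (C₁ * ε^((m:ℝ)-1)) := by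
      have h1 : M^2 * (L - ε) ≤ M^2 * (C₁ * ε^((m:ℝ)-1)) :=
        mul_le_mul_of_nonneg_left hD (sq_nonneg M)
      linarith [hintlow, hsplit, hup]
    have hM2pos : 0 < M^2 := by positivity
    have hr4 : r ≤ 4*(C₁ * ε^((m:ℝ)-1)) := by nlinarith
    have hMr : M = 2*K*μ*r := by
      rw [hrdef]
      field_simp
    calc M = 2*K*μ*r := hMr
    _ ≤ 2*K*μ*(4*(C₁ * ε^((m:ℝ)-1))) := by
        apply mul_le_mul_of_nonneg_left hr4 (by positivity)
    _ = 8*K*C₁*(μ * ε^((m:ℝ)-1)) := by ring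
    _ = 8*K*C₁ * ε ^ ((3*(m:ℝ)-2)/2) := by
        rw [hμdef, ← Real.rpow_add hε]
        congr 2
        ring
end

section
/- For every K > 0 there exist ε₀(K) > 0 and C(K) > 0 such that for every ε ∈ (0, ε₀(K)), every minimizing extremal (ω, θ, λ) for ε (with ω defined on [0,L]), and every t ∈ [0,L] with ω₂(t) ≥ K·ε, one has ω₁(s) ≥ C(K)·ε^{m̄} and ω₂(s) ≥ C(K)·ε for every s ∈ [t, L]. -/
open MeasureTheory

namespace S10

open Set Real intervalIntegral

lemma hp1 {m : ℕ} (hm : 5 ≤ m) : (1:ℝ) ≤ (m:ℝ)/2 := by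
  have : (5:ℝ) ≤ (m:ℝ) := by exact_mod_cast hm
  linarith

lemma bar_hasDerivAt (m : ℕ) (hm : 5 ≤ m) (t : ℝ) :
    HasDerivAt (barCurve m) ((((m:ℝ)/2) * t ^ ((m:ℝ)/2 - 1), (1:ℝ))) t := by
  have h1 : HasDerivAt (fun t : ℝ => t ^ ((m:ℝ)/2)) (((m:ℝ)/2) * t ^ ((m:ℝ)/2 - 1)) t :=
    Real.hasDerivAt_rpow_const (Or.inr (hp1 hm))
  exact h1.prodMk (hasDerivAt_id t)

lemma rpow_sq_eq (m : ℕ) {t : ℝ} (ht : 0 ≤ t) : (t ^ ((m:ℝ)/2)) ^ 2 = t ^ m := by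
  rw [← Real.rpow_natCast (t ^ ((m:ℝ)/2)) 2, ← Real.rpow_mul ht]
  rw [show (m:ℝ)/2 * ((2:ℕ):ℝ) = ((m:ℕ):ℝ) by push_cast; ring, Real.rpow_natCast]

lemma bar_isCompetitor (m : ℕ) (hm : 5 ≤ m) {ε : ℝ} (hε : 0 < ε) :
    IsCompetitor m ε ε (barCurve m)
      (fun t => (((m:ℝ)/2) * t ^ ((m:ℝ)/2 - 1), 1)) := by
  have h1 := hp1 hm
  refine ⟨hε.le, ?_, ?_, rfl, ?_, ?_⟩
  · refine ⟨Real.toNNReal (((m:ℝ)/2) * ε ^ ((m:ℝ)/2 - 1) + 1), ?_⟩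
    apply (convex_Icc (0:ℝ) ε).lipschitzOnWith_of_nnnorm_hasDerivWithin_le
      (f' := fun t => ((((m:ℝ)/2) * t ^ ((m:ℝ)/2 - 1), 1) : ℝ × ℝ))
      (fun x _ => (bar_hasDerivAt m hm x).hasDerivWithinAt)
    intro x hx
    have hb : ‖((((m:ℝ)/2) * x ^ ((m:ℝ)/2 - 1), 1) : ℝ × ℝ)‖
        ≤ ((m:ℝ)/2) * ε ^ ((m:ℝ)/2 - 1) + 1 := by
      rw [Prod.norm_def]
      have hxe : x ^ ((m:ℝ)/2 - 1) ≤ ε ^ ((m:ℝ)/2 - 1) :=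
        Real.rpow_le_rpow hx.1 hx.2 (by linarith)
      have hx0 : (0:ℝ) ≤ x ^ ((m:ℝ)/2 - 1) := Real.rpow_nonneg hx.1 _
      simp only [Real.norm_eq_abs]
      apply max_le
      · rw [abs_of_nonneg (by positivity)]
        nlinarith [Real.rpow_nonneg hε.le ((m:ℝ)/2 - 1)]
      · rw [abs_one]
        nlinarith [Real.rpow_nonneg hε.le ((m:ℝ)/2 - 1)]
    rw [← NNReal.coe_le_coe]
    push_cast
    rw [Real.coe_toNNReal _ (by positivity)]
    exact hb
  · simp [barCurve, Real.zero_rpow (by positivity : (m:ℝ)/2 ≠ 0)]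
  · exact Filter.Eventually.of_forall fun t _ => bar_hasDerivAt m hm t
  · have : EqOn (fun t => (Pf m (barCurve m t)) ^ 2 *
        ((fun t => ((((m:ℝ)/2) * t ^ ((m:ℝ)/2 - 1), (1:ℝ)))) t).2) (fun _ => (0:ℝ))
        (uIcc 0 ε) := by
      intro t ht
      rw [uIcc_of_le hε.le] at ht
      simp only [Pf, barCurve]
      rw [rpow_sq_eq m ht.1]
      simp
    rw [intervalIntegral.integral_congr this]
    simp

lemma sqrt_le_one_add_half {a : ℝ} (ha : 0 ≤ a) : Real.sqrt (a + 1) ≤ 1 + a/2 := by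
  have h : a + 1 ≤ (1 + a/2)^2 := by nlinarith
  calc Real.sqrt (a + 1) ≤ Real.sqrt ((1 + a/2)^2) := Real.sqrt_le_sqrt h
  _ = 1 + a/2 := Real.sqrt_sq (by linarith)

lemma bar_eLength_le (m : ℕ) (hm : 5 ≤ m) {ε : ℝ} (hε : 0 < ε) :
    eLength (fun t => (((m:ℝ)/2) * t ^ ((m:ℝ)/2 - 1), 1)) ε
      ≤ ε + (m:ℝ)^2/8 * ε ^ ((m:ℝ) - 1) := by
  have h1 := hp1 hm
  set p : ℝ := (m:ℝ)/2 with hp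
  have key : ∀ t ∈ Icc (0:ℝ) ε,
      Real.sqrt ((p * t ^ (p - 1))^2 + 1^2) ≤ 1 + p^2 * ε ^ ((m:ℝ)-2) / 2 := by
    intro t ht
    have h2 : (t ^ (p-1))^2 = t ^ ((m:ℝ)-2) := by
      rw [← Real.rpow_natCast (t ^ (p-1)) 2, ← Real.rpow_mul ht.1]
      congr 1
      push_cast; rw [hp]; ring
    have h3 : t ^ ((m:ℝ)-2) ≤ ε ^ ((m:ℝ)-2) :=
      Real.rpow_le_rpow ht.1 ht.2 (by
        have : (5:ℝ) ≤ (m:ℝ) := by exact_mod_cast hm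
        linarith)
    have h4 : (p * t ^ (p-1))^2 + 1^2 ≤ p^2 * ε ^ ((m:ℝ)-2) + 1 := by
      have := Real.rpow_nonneg ht.1 (p-1)
      nlinarith
    calc Real.sqrt ((p * t ^ (p-1))^2 + 1^2) ≤ Real.sqrt (p^2 * ε ^ ((m:ℝ)-2) + 1) :=
          Real.sqrt_le_sqrt h4
    _ ≤ 1 + p^2 * ε ^ ((m:ℝ)-2) / 2 := by
        have := sqrt_le_one_add_half (a := p^2 * ε ^ ((m:ℝ)-2)) (by positivity)
        linarith
  have hcont : ContinuousOn (fun t : ℝ => Real.sqrt ((p * t ^ (p - 1))^2 + 1^2)) (Icc 0 ε) := by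
    apply Real.continuous_sqrt.comp_continuousOn
    apply ContinuousOn.add _ continuousOn_const
    apply ContinuousOn.pow
    apply ContinuousOn.mul continuousOn_const
    intro x _
    exact (Real.continuousAt_rpow_const x _ (Or.inr (by linarith))).continuousWithinAt
  have hint : IntervalIntegrable (fun t : ℝ => Real.sqrt ((p * t ^ (p - 1))^2 + 1^2))
      volume 0 ε := (hcont.mono (by rw [uIcc_of_le hε.le])).intervalIntegrable
  have hmono := intervalIntegral.integral_mono_on hε.le hint intervalIntegrable_const key
  rw [intervalIntegral.integral_const] at hmono
  have heq : ε * ε ^ ((m:ℝ)-2) = ε ^ ((m:ℝ)-1) := by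
    nth_rewrite 1 [← Real.rpow_one ε]
    rw [← Real.rpow_add hε]
    ring_nf
  unfold eLength
  simp only [smul_eq_mul, sub_zero] at hmono
  calc (∫ t in (0:ℝ)..ε, Real.sqrt ((p * t ^ (p-1))^2 + 1^2))
      ≤ ε * (1 + p^2 * ε ^ ((m:ℝ)-2) / 2) := hmono
  _ = ε + (m:ℝ)^2/8 * ε ^ ((m:ℝ) - 1) := by
      rw [mul_add, mul_one]
      rw [show ε * (p^2 * ε ^ ((m:ℝ)-2) / 2) = p^2/2 * (ε * ε ^ ((m:ℝ)-2)) by ring, heq]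
      rw [hp]; ring

/-- FTC for the two components of an extremal curve. -/
lemma omega_ftc {L : ℝ} {ω : ℝ → ℝ × ℝ} {θ : ℝ → ℝ}
    (hω : ∀ t ∈ Icc (0:ℝ) L, HasDerivAt ω (Real.cos (θ t), Real.sin (θ t)) t)
    (hθc : ContinuousOn θ (Icc 0 L))
    {u v : ℝ} (hu : 0 ≤ u) (huv : u ≤ v) (hv : v ≤ L) :
    ((ω v).1 - (ω u).1 = ∫ s in u..v, Real.cos (θ s)) ∧
    ((ω v).2 - (ω u).2 = ∫ s in u..v, Real.sin (θ s)) := by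
  have hL0 : (0:ℝ) ≤ L := le_trans hu (le_trans huv hv)
  have hsub : Icc u v ⊆ Icc 0 L := Icc_subset_Icc hu hv
  have hθc' : ContinuousOn θ (Icc u v) := hθc.mono hsub
  constructor
  · have h1 : ∀ s ∈ uIcc u v, HasDerivAt (fun r => (ω r).1) (Real.cos (θ s)) s := by
      intro s hs
      rw [uIcc_of_le huv] at hs
      exact (hasFDerivAt_fst.comp_hasDerivAt s (hω s (hsub hs)))
    have hint : IntervalIntegrable (fun s => Real.cos (θ s)) volume u v := by
      apply ContinuousOn.intervalIntegrable
      rw [uIcc_of_le huv]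
      exact Real.continuous_cos.comp_continuousOn hθc'
    rw [← intervalIntegral.integral_eq_sub_of_hasDerivAt h1 hint]
  · have h1 : ∀ s ∈ uIcc u v, HasDerivAt (fun r => (ω r).2) (Real.sin (θ s)) s := by
      intro s hs
      rw [uIcc_of_le huv] at hs
      exact (hasFDerivAt_snd.comp_hasDerivAt s (hω s (hsub hs)))
    have hint : IntervalIntegrable (fun s => Real.sin (θ s)) volume u v := by
      apply ContinuousOn.intervalIntegrable
      rw [uIcc_of_le huv]
      exact Real.continuous_sin.comp_continuousOn hθc'
    rw [← intervalIntegral.integral_eq_sub_of_hasDerivAt h1 hint]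

lemma cos_sq_le_two_mul (x : ℝ) : Real.cos x ^ 2 ≤ 2*(1 - Real.sin x) := by
  nlinarith [Real.sin_le_one x, Real.sin_sq_add_cos_sq x]

lemma abs_cos_le_amgm (δ x : ℝ) (hδ : 0 < δ) :
    |Real.cos x| ≤ (δ^2 + Real.cos x ^2)/(2*δ) := by
  rw [le_div_iff₀ (by linarith)]
  nlinarith [sq_nonneg (|Real.cos x| - δ), sq_abs (Real.cos x)]

end S10

set_option maxHeartbeats 2000000 in
open Set Real intervalIntegral S10 in
theorem statement10 (m : ℕ) (hodd : Odd m) (hm : 5 ≤ m) (K : ℝ) (hK : 0 < K) :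
    ∃ ε₀ > (0:ℝ), ∃ C > (0:ℝ), ∀ ε ∈ Set.Ioo (0:ℝ) ε₀,
      ∀ (L lam : ℝ) (ω : ℝ → ℝ × ℝ) (θ : ℝ → ℝ), IsMinExtremal m ε L lam ω θ →
        ∀ t ∈ Set.Icc (0:ℝ) L, K * ε ≤ (ω t).2 →
          ∀ s ∈ Set.Icc t L, C * ε ^ ((m : ℝ) / 2) ≤ (ω s).1 ∧ C * ε ≤ (ω s).2 := by
  have hm5 : (5:ℝ) ≤ (m:ℝ) := by exact_mod_cast hm
  set p : ℝ := (m:ℝ)/2 with hpdef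
  set q : ℝ := ((m:ℝ)-2)/4 with hqdef
  have hq : 0 < q := by rw [hqdef]; linarith
  set a2 : ℝ := (m:ℝ)^2/8 with ha2def
  have ha2 : 0 < a2 := by rw [ha2def]; nlinarith
  set g : ℝ := 1 + (m:ℝ)^2/8 with hgdef
  have hg : 0 < g := by rw [hgdef]; nlinarith
  set b : ℝ := g^2 + 2^m with hbdef
  have hb : 0 < b := by rw [hbdef]; positivity
  have hK4 : 0 < (K/4:ℝ) := by linarith
  have hK4p : 0 < (K/4:ℝ) ^ p := Real.rpow_pos_of_pos hK4 p
  set C1 : ℝ := min 1 ((K/4) ^ p / 3) with hC1def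
  have hC1 : 0 < C1 := lt_min one_pos (by positivity)
  set c : ℝ := (K/4)^m / 2 with hcdef
  have hc : 0 < c := by rw [hcdef]; positivity
  set β : ℝ := min (min (1/a2) (K/a2)) (min (min (K/4) (C1/g)) (c^2/(2*a2*b^2)))
    with hβdef
  have hβ : 0 < β := by
    apply lt_min (lt_min (by positivity) (by positivity))
    exact lt_min (lt_min hK4 (by positivity)) (by positivity)
  refine ⟨min 1 (β ^ (1/q)), lt_min one_pos (Real.rpow_pos_of_pos hβ _), min C1 (K/2),
    lt_min hC1 (by linarith), ?_⟩
  rintro ε ⟨hε, hεlt⟩ L lam ω θ hME t ht hKt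
  have hε1 : ε ≤ 1 := le_of_lt (lt_of_lt_of_le hεlt (min_le_left _ _))
  have hεq : ε ^ q < β := by
    have h2 : ε < β ^ (1/q) := lt_of_lt_of_le hεlt (min_le_right _ _)
    have h3 := Real.rpow_lt_rpow hε.le h2 hq
    rwa [← Real.rpow_mul hβ.le, one_div_mul_cancel hq.ne', Real.rpow_one] at h3
  have e4q : ε ^ ((m:ℝ)-2) ≤ ε ^ q :=
    Real.rpow_le_rpow_of_exponent_ge hε hε1 (by rw [hqdef]; linarith)
  have e2q : ε ^ (2*q) ≤ ε ^ q :=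
    Real.rpow_le_rpow_of_exponent_ge hε hε1 (by linarith)
  have hβ1 : β ≤ 1/a2 := le_trans (min_le_left _ _) (min_le_left _ _)
  have hβ2 : β ≤ K/a2 := le_trans (min_le_left _ _) (min_le_right _ _)
  have hβ3 : β ≤ K/4 :=
    le_trans (min_le_right _ _) (le_trans (min_le_left _ _) (min_le_left _ _))
  have hβ4 : β ≤ C1/g :=
    le_trans (min_le_right _ _) (le_trans (min_le_left _ _) (min_le_right _ _))
  have hβ5 : β ≤ c^2/(2*a2*b^2) := le_trans (min_le_right _ _) (min_le_right _ _)
  have hc1 : a2 * ε ^ ((m:ℝ)-2) ≤ 1 := by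
    have h := le_trans e4q (le_trans hεq.le hβ1)
    rw [le_div_iff₀ ha2] at h; linarith
  have hc2 : a2 * ε ^ ((m:ℝ)-2) ≤ K := by
    have h := le_trans e4q (le_trans hεq.le hβ2)
    rw [le_div_iff₀ ha2] at h; linarith
  have hc3 : ε ^ (p-1) ≤ K/4 := by
    rw [show p - 1 = 2*q by rw [hpdef, hqdef]; ring]
    exact le_trans e2q (le_trans hεq.le hβ3)
  have hc4 : g * ε ^ q ≤ C1 := by
    have h := le_trans hεq.le hβ4
    rw [le_div_iff₀ hg] at h; linarith
  have hc5 : a2 * b^2 * ε^(2*q) < c^2 := by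
    have h : ε^(2*q) < c^2/(2*a2*b^2) := lt_of_le_of_lt e2q (lt_of_lt_of_le hεq hβ5)
    rw [lt_div_iff₀ (by positivity)] at h
    have hcsq := sq_nonneg c
    linarith
  -- unpack the extremal
  obtain ⟨hL0, hω, hθd, hcomp, hmin, -⟩ := hME
  obtain ⟨-, -, hω0, hωL, -, hconstr⟩ := hcomp
  have hθc : ContinuousOn θ (Icc 0 L) := fun r hr => ((hθd r hr).continuousAt).continuousWithinAt
  have hωc : ContinuousOn ω (Icc 0 L) := fun r hr => ((hω r hr).continuousAt).continuousWithinAt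
  have hωc1 : ContinuousOn (fun r => (ω r).1) (Icc 0 L) := continuous_fst.comp_continuousOn hωc
  have hωL1 : (ω L).1 = ε ^ p := by rw [hωL]; rfl
  have hωL2 : (ω L).2 = ε := by rw [hωL]; rfl
  have hω01 : (ω 0).1 = 0 := by rw [hω0]
  have hω02 : (ω 0).2 = 0 := by rw [hω0]
  have ftc : ∀ {u v : ℝ}, 0 ≤ u → u ≤ v → v ≤ L →
      ((ω v).1 - (ω u).1 = ∫ r in u..v, Real.cos (θ r)) ∧
      ((ω v).2 - (ω u).2 = ∫ r in u..v, Real.sin (θ r)) :=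
    fun hu huv hv => S10.omega_ftc hω hθc hu huv hv
  -- ω₂ is 1-Lipschitz
  have hsinle : ∀ u v, 0 ≤ u → u ≤ v → v ≤ L → |(ω v).2 - (ω u).2| ≤ v - u := by
    intro u v hu huv hv
    rw [(ftc hu huv hv).2]
    have h := intervalIntegral.norm_integral_le_of_norm_le_const (C := 1)
      (f := fun r => Real.sin (θ r)) (a := u) (b := v)
      (fun x _ => by rw [Real.norm_eq_abs]; exact Real.abs_sin_le_one _)
    rw [Real.norm_eq_abs, abs_of_nonneg (by linarith : (0:ℝ) ≤ v - u)] at h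
    linarith
  have hω2le : ∀ r, r ∈ Icc (0:ℝ) L → |(ω r).2| ≤ r := by
    intro r hr
    have h := hsinle 0 r le_rfl hr.1 hr.2
    rwa [hω02, sub_zero, sub_zero] at h
  have hεint : (∫ r in (0:ℝ)..L, Real.sin (θ r)) = ε := by
    have h := (ftc le_rfl hL0.le le_rfl).2
    rw [hωL2, hω02, sub_zero] at h
    exact h.symm
  have hεL : ε ≤ L := by
    have h := hω2le L ⟨hL0.le, le_rfl⟩
    rw [hωL2] at h
    exact le_trans (le_abs_self ε) h
  have hLle : L ≤ ε + a2 * ε ^ ((m:ℝ)-1) :=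
    le_trans (hmin ε _ _ (S10.bar_isCompetitor m hm hε)) (S10.bar_eLength_le m hm hε)
  have hεm1 : ε ^ ((m:ℝ)-1) = ε ^ ((m:ℝ)-2) * ε := by
    rw [show (m:ℝ)-1 = ((m:ℝ)-2) + 1 by ring, Real.rpow_add hε, Real.rpow_one]
  have hL2ε : L ≤ 2*ε := by
    have h : a2 * ε ^ ((m:ℝ)-1) ≤ ε := by
      rw [hεm1]
      calc a2 * (ε ^ ((m:ℝ)-2) * ε) = (a2 * ε ^ ((m:ℝ)-2)) * ε := by ring
      _ ≤ 1 * ε := mul_le_mul_of_nonneg_right hc1 hε.le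
      _ = ε := one_mul ε
    linarith
  have hD : L - ε ≤ a2 * ε ^ ((m:ℝ)-1) := by linarith
  -- integrability facts
  have hcos2cont : ContinuousOn (fun r => Real.cos (θ r)^2) (Icc 0 L) :=
    (Real.continuous_cos.comp_continuousOn hθc).pow 2
  have hsincont : ContinuousOn (fun r => Real.sin (θ r)) (Icc 0 L) :=
    Real.continuous_sin.comp_continuousOn hθc
  have hII : ∀ (f : ℝ → ℝ), ContinuousOn f (Icc 0 L) → ∀ u v, 0 ≤ u → u ≤ v → v ≤ L →
      IntervalIntegrable f volume u v := by
    intro f hf u v hu huv hv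
    apply ContinuousOn.intervalIntegrable
    apply hf.mono
    rw [uIcc_of_le huv]
    exact Icc_subset_Icc hu hv
  -- the energy E
  set E : ℝ := ∫ r in (0:ℝ)..L, Real.cos (θ r)^2 with hEdef
  have h1msincont : ContinuousOn (fun r => 1 - Real.sin (θ r)) (Icc 0 L) :=
    continuousOn_const.sub hsincont
  have hone_sub : (∫ r in (0:ℝ)..L, (1 - Real.sin (θ r))) = L - ε := by
    rw [intervalIntegral.integral_sub intervalIntegrable_const
      (hII _ hsincont 0 L le_rfl hL0.le le_rfl), hεint]
    simp
  have hE2 : E ≤ 2*(L-ε) := by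
    have hmono := intervalIntegral.integral_mono_on (f := fun r => Real.cos (θ r)^2)
      (g := fun r => 2*(1 - Real.sin (θ r))) hL0.le
      (hII _ hcos2cont 0 L le_rfl hL0.le le_rfl)
      (hII _ (continuousOn_const.mul h1msincont) 0 L le_rfl hL0.le le_rfl)
      (fun x _ => S10.cos_sq_le_two_mul (θ x))
    rw [intervalIntegral.integral_const_mul, hone_sub] at hmono
    exact hmono
  have hE0 : 0 ≤ E := intervalIntegral.integral_nonneg hL0.le (fun x _ => sq_nonneg _)
  have hEsub : ∀ u v, 0 ≤ u → u ≤ v → v ≤ L →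
      (∫ r in u..v, Real.cos (θ r)^2) ≤ E := by
    intro u v hu huv hv
    have i1 := hII _ hcos2cont 0 u le_rfl hu (le_trans huv hv)
    have i2 := hII _ hcos2cont u v hu huv hv
    have i3 := hII _ hcos2cont v L (le_trans hu huv) hv le_rfl
    have e1 := intervalIntegral.integral_add_adjacent_intervals i1 i2
    have e2 := intervalIntegral.integral_add_adjacent_intervals (i1.trans i2) i3
    have n1 : 0 ≤ ∫ r in (0:ℝ)..u, Real.cos (θ r)^2 :=
      intervalIntegral.integral_nonneg hu (fun x _ => sq_nonneg _)
    have n3 : 0 ≤ ∫ r in v..L, Real.cos (θ r)^2 :=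
      intervalIntegral.integral_nonneg hv (fun x _ => sq_nonneg _)
    rw [hEdef]
    linarith [e1, e2]
  -- oscillation bound for ω₁
  have hosc : ∀ u v δ, 0 ≤ u → u ≤ v → v ≤ L → 0 < δ →
      |(ω v).1 - (ω u).1| ≤ (δ*(v-u) + E/δ)/2 := by
    intro u v δ hu huv hv hδ
    rw [(ftc hu huv hv).1]
    have habs : |∫ r in u..v, Real.cos (θ r)| ≤ ∫ r in u..v, |Real.cos (θ r)| := by
      have := intervalIntegral.norm_integral_le_integral_norm
        (f := fun r => Real.cos (θ r)) (μ := MeasureTheory.volume) huv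
      simpa [Real.norm_eq_abs] using this
    have habscont : ContinuousOn (fun r => |Real.cos (θ r)|) (Icc 0 L) :=
      (Real.continuous_cos.comp_continuousOn hθc).abs
    have hrhscont : ContinuousOn (fun r => (δ^2 + Real.cos (θ r)^2)/(2*δ)) (Icc 0 L) :=
      (continuousOn_const.add hcos2cont).div_const _
    have hpt : ∀ x ∈ Icc u v, |Real.cos (θ x)| ≤ (δ^2 + Real.cos (θ x)^2)/(2*δ) :=
      fun x _ => S10.abs_cos_le_amgm δ (θ x) hδ
    have hmono := intervalIntegral.integral_mono_on huv
      (hII _ habscont u v hu huv hv) (hII _ hrhscont u v hu huv hv) hpt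
    have hsplit : (∫ r in u..v, (δ^2 + Real.cos (θ r)^2)/(2*δ))
        = (δ^2*(v-u) + ∫ r in u..v, Real.cos (θ r)^2)/(2*δ) := by
      rw [intervalIntegral.integral_div, intervalIntegral.integral_add
        intervalIntegrable_const (hII _ hcos2cont u v hu huv hv),
        intervalIntegral.integral_const]
      simp [smul_eq_mul]
      ring_nf
    have hcs := hEsub u v hu huv hv
    have hfin : (δ^2*(v-u) + ∫ r in u..v, Real.cos (θ r)^2)/(2*δ)
        ≤ (δ*(v-u) + E/δ)/2 := by
      rw [div_le_div_iff₀ (by linarith) (by norm_num)]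
      have h2 : (δ*(v-u) + E/δ) * (2*δ) = 2*δ^2*(v-u) + 2*E := by
        field_simp
      rw [h2]
      linarith
    calc |∫ r in u..v, Real.cos (θ r)| ≤ ∫ r in u..v, |Real.cos (θ r)| := habs
    _ ≤ (∫ r in u..v, (δ^2 + Real.cos (θ r)^2)/(2*δ)) := hmono
    _ = (δ^2*(v-u) + ∫ r in u..v, Real.cos (θ r)^2)/(2*δ) := hsplit
    _ ≤ (δ*(v-u) + E/δ)/2 := hfin
  -- global bound on ω₁
  have hq2pos : (0:ℝ) < ε ^ (2*q) := Real.rpow_pos_of_pos hε _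
  have hqpos : (0:ℝ) < ε ^ q := Real.rpow_pos_of_pos hε q
  have hppos : (0:ℝ) < ε ^ p := Real.rpow_pos_of_pos hε p
  have hp2q1 : ε^(2*q) * ε = ε ^ p := by
    rw [show p = 2*q + 1 by rw [hpdef, hqdef]; ring, Real.rpow_add hε, Real.rpow_one]
  have hm1pq : ε ^ ((m:ℝ)-1) = ε^p * ε^(2*q) := by
    rw [show (m:ℝ)-1 = p + 2*q by rw [hpdef, hqdef]; ring, Real.rpow_add hε]
  have hω1glob : ∀ r, r ∈ Icc (0:ℝ) L → |(ω r).1| ≤ g * ε ^ p := by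
    intro r hr
    have h := hosc 0 r (ε^(2*q)) le_rfl hr.1 hr.2 hq2pos
    rw [hω01, sub_zero, sub_zero] at h
    have h1 : ε^(2*q)*r ≤ 2*(ε^p) := by
      have h1a : ε^(2*q)*r ≤ ε^(2*q)*(2*ε) :=
        mul_le_mul_of_nonneg_left (le_trans hr.2 hL2ε) hq2pos.le
      have h1b : ε^(2*q)*(2*ε) = 2*(ε^p) := by rw [← hp2q1]; ring
      linarith
    have h2 : E/(ε^(2*q)) ≤ 2*a2*ε^p := by
      rw [div_le_iff₀ hq2pos]
      calc E ≤ 2*(L-ε) := hE2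
      _ ≤ 2*(a2*ε^((m:ℝ)-1)) := by linarith
      _ = 2*a2*ε^p * ε^(2*q) := by rw [hm1pq]; ring
    calc |(ω r).1| ≤ (ε^(2*q)*r + E/(ε^(2*q)))/2 := h
    _ ≤ (2*(ε^p) + 2*a2*ε^p)/2 := by linarith [h1, h2]
    _ = g * ε ^ p := by rw [hgdef, ha2def]; ring
  -- pointwise bound on Pf along ω
  have hPfc : Continuous (Pf m) := by
    unfold Pf; fun_prop
  have hP2cont : ContinuousOn (fun r => (Pf m (ω r))^2) (Icc 0 L) :=
    (hPfc.comp_continuousOn hωc).pow 2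
  have hω1glob' := hω1glob
  have hPb : ∀ r, r ∈ Icc (0:ℝ) L → (Pf m (ω r))^2 ≤ (b*ε^m)^2 := by
    intro r hr
    have h1 := hω1glob r hr
    have h2 : |(ω r).2| ≤ 2*ε := le_trans (hω2le r hr) (le_trans hr.2 hL2ε)
    have h3 : ((ω r).1)^2 ≤ g^2 * ε^m := by
      have hh := pow_le_pow_left₀ (abs_nonneg ((ω r).1)) h1 2
      rw [sq_abs] at hh
      have h4 := S10.rpow_sq_eq m hε.le
      rw [← hpdef] at h4
      calc ((ω r).1)^2 ≤ (g*ε^p)^2 := hh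
      _ = g^2 * (ε^p)^2 := by ring
      _ = g^2 * ε^m := by rw [h4]
    have h4 : |((ω r).2)^m| ≤ 2^m * ε^m := by
      rw [abs_pow]
      calc |(ω r).2|^m ≤ (2*ε)^m := pow_le_pow_left₀ (abs_nonneg _) h2 m
      _ = 2^m * ε^m := mul_pow 2 ε m
    have h5 : |Pf m (ω r)| ≤ b * ε^m := by
      have h6 : |(ω r).1^2 - (ω r).2^m| ≤ |(ω r).1^2| + |(ω r).2^m| := abs_sub _ _
      rw [abs_of_nonneg (sq_nonneg ((ω r).1))] at h6
      rw [show Pf m (ω r) = (ω r).1^2 - (ω r).2^m from rfl, hbdef]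
      linarith [h3, h4, h6, sq_nonneg ((ω r).1)]
    calc (Pf m (ω r))^2 = |Pf m (ω r)|^2 := (sq_abs _).symm
    _ ≤ (b*ε^m)^2 := pow_le_pow_left₀ (abs_nonneg _) h5 2
  -- Part 1 : lower bound on the second coordinate after time t
  have htK : K * ε ≤ t := le_trans hKt (le_trans (le_abs_self _) (hω2le t ht))
  have part1 : ∀ r, r ∈ Icc t L → K/2 * ε ≤ (ω r).2 := by
    intro r hr
    have h0t : 0 ≤ t := ht.1
    have h1 : (ω t).2 ≤ t := le_trans (le_abs_self _) (hω2le t ht)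
    have h2 := abs_le.mp (hsinle t r h0t hr.1 hr.2)
    have h3 := abs_le.mp (hsinle r L (le_trans h0t hr.1) hr.2 le_rfl)
    rw [hωL2] at h3
    have h4 : a2*ε^((m:ℝ)-1) ≤ K*ε := by
      rw [hεm1]
      calc a2 * (ε ^ ((m:ℝ)-2) * ε) = (a2 * ε ^ ((m:ℝ)-2)) * ε := by ring
      _ ≤ K * ε := mul_le_mul_of_nonneg_right hc2 hε.le
    linarith [h2.1, h2.2, h3.1, h3.2, hLle]
  -- Part 2 : |ω₁| stays above C1 ε^p after time t
  have hρeq : ε^p = ε^(p-1)*ε := by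
    have h := Real.rpow_add hε (p-1) 1
    rw [Real.rpow_one, show p - 1 + 1 = p by ring] at h
    exact h
  have part2 : ∀ s₀, s₀ ∈ Icc t L → C1 * ε ^ p ≤ |(ω s₀).1| := by
    intro s₀ hs₀
    by_contra hcon
    push_neg at hcon
    have hρK : ε^p ≤ K/4 * ε := by
      rw [hρeq]
      exact mul_le_mul_of_nonneg_right hc3 hε.le
    have hρs₀ : ε^p ≤ s₀ := by
      have hKε := mul_pos hK hε
      linarith [hs₀.1, htK]
    have hs₀ρ0 : 0 ≤ s₀ - ε^p := by linarith
    have hIsub : Icc (s₀ - ε^p) s₀ ⊆ Icc 0 L := fun x hx =>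
      ⟨by linarith [hx.1], le_trans hx.2 hs₀.2⟩
    have hω2I : ∀ x ∈ Icc (s₀ - ε^p) s₀, (K/4)*ε ≤ (ω x).2 := by
      intro x hx
      have h1 := part1 s₀ hs₀
      have h2 := (abs_le.mp (hsinle x s₀ (hIsub hx).1 hx.2 hs₀.2)).2
      have hx1 : s₀ - x ≤ ε^p := by linarith [hx.1]
      linarith [hρK]
    have hω1I : ∀ x ∈ Icc (s₀ - ε^p) s₀, |(ω x).1| ≤ 2*C1*ε^p := by
      intro x hx
      have hoscx := hosc x s₀ (ε^q) (hIsub hx).1 hx.2 hs₀.2 hqpos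
      have h1 : ε^q * (s₀ - x) ≤ ε^q * ε^p :=
        mul_le_mul_of_nonneg_left (by linarith [hx.1]) hqpos.le
      have hpq : ε^(p+q) = ε^p * ε^q := Real.rpow_add hε p q
      have h3 : E / ε^q ≤ 2*a2*(ε^p * ε^q) := by
        rw [div_le_iff₀ hqpos]
        have h3a : (ε^p*ε^q) * ε^q = ε^((m:ℝ)-1) := by
          rw [← hpq, ← Real.rpow_add hε]
          congr 1
          rw [hpdef, hqdef]; ring
        calc E ≤ 2*(L-ε) := hE2
        _ ≤ 2*(a2*ε^((m:ℝ)-1)) := by linarith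
        _ = 2*a2*(ε^p*ε^q) * ε^q := by rw [← h3a]; ring
      have h4 : |(ω s₀).1 - (ω x).1| ≤ g * (ε^p * ε^q) := by
        calc |(ω s₀).1 - (ω x).1| ≤ (ε^q*(s₀-x) + E/(ε^q))/2 := hoscx
        _ ≤ (ε^q*ε^p + 2*a2*(ε^p*ε^q))/2 := by linarith [h1, h3]
        _ ≤ g * (ε^p * ε^q) := by
            rw [hgdef, ha2def]
            linarith [mul_pos hppos hqpos]
      have h5 : g*(ε^p*ε^q) ≤ C1*ε^p := by
        calc g*(ε^p*ε^q) = g*ε^q*ε^p := by ring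
        _ ≤ C1*ε^p := mul_le_mul_of_nonneg_right hc4 hppos.le
      have h6 := abs_sub_abs_le_abs_sub ((ω x).1) ((ω s₀).1)
      rw [abs_sub_comm] at h6
      linarith [hcon, h4, h5, h6]
    have hK4m0 : (0:ℝ) ≤ (K/4)^m := pow_nonneg hK4.le m
    have hC1sq : 4*C1^2 ≤ (K/4)^m/2 := by
      have h1 : C1 ≤ (K/4)^p/3 := min_le_right _ _
      have h2 : ((K/4:ℝ)^p)^2 = (K/4)^m := S10.rpow_sq_eq m hK4.le
      have h3 := pow_le_pow_left₀ hC1.le h1 2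
      rw [div_pow, h2] at h3
      linarith [h3, hK4m0]
    have hεm0 : (0:ℝ) ≤ ε^m := by positivity
    have hPneg : ∀ x ∈ Icc (s₀ - ε^p) s₀, Pf m (ω x) ≤ -(c*ε^m) := by
      intro x hx
      have h1 := hω1I x hx
      have h2 := hω2I x hx
      have h3 : ((ω x).1)^2 ≤ 4*C1^2*ε^m := by
        have hh := pow_le_pow_left₀ (abs_nonneg ((ω x).1)) h1 2
        rw [sq_abs] at hh
        have h4 := S10.rpow_sq_eq m hε.le
        rw [← hpdef] at h4
        calc ((ω x).1)^2 ≤ (2*C1*ε^p)^2 := hh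
        _ = 4*C1^2*(ε^p)^2 := by ring
        _ = 4*C1^2*ε^m := by rw [h4]
      have h5 : ((K/4)*ε)^m ≤ ((ω x).2)^m := pow_le_pow_left₀ (by positivity) h2 m
      rw [mul_pow] at h5
      have h7 := mul_le_mul_of_nonneg_right hC1sq hεm0
      show (ω x).1 ^ 2 - (ω x).2 ^ m ≤ -(c*ε^m)
      rw [hcdef]
      linarith [h3, h5, h7]
    have hP2 : ∀ x ∈ Icc (s₀ - ε^p) s₀, (c*ε^m)^2 ≤ (Pf m (ω x))^2 := by
      intro x hx
      have h7 : c*ε^m ≤ -(Pf m (ω x)) := by linarith [hPneg x hx]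
      have h8 := pow_le_pow_left₀ (by positivity) h7 2
      rwa [neg_pow, Even.neg_one_pow (by norm_num), one_mul] at h8
    -- the constraint integral
    have hPsin0 : (∫ r in (0:ℝ)..L, (Pf m (ω r))^2 * Real.sin (θ r)) = 0 := by
      simpa using hconstr
    have iP := hII _ hP2cont 0 L le_rfl hL0.le le_rfl
    have iPsin := hII _ (hP2cont.mul hsincont) 0 L le_rfl hL0.le le_rfl
    have hsplit2 : (∫ r in (0:ℝ)..L, (Pf m (ω r))^2 * (1 - Real.sin (θ r)))
        = ∫ r in (0:ℝ)..L, (Pf m (ω r))^2 := by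
      have hcg : EqOn (fun r => (Pf m (ω r))^2 * (1 - Real.sin (θ r)))
          (fun r => (Pf m (ω r))^2 - (Pf m (ω r))^2 * Real.sin (θ r)) (uIcc 0 L) := by
        intro x _; ring
      rw [intervalIntegral.integral_congr hcg,
        intervalIntegral.integral_sub (g := fun r => (Pf m (ω r))^2 * Real.sin (θ r)) iP iPsin, hPsin0, sub_zero]
    have hup : (∫ r in (0:ℝ)..L, (Pf m (ω r))^2 * (1 - Real.sin (θ r)))
        ≤ (b*ε^m)^2 * (L - ε) := by
      have hmono := intervalIntegral.integral_mono_on hL0.le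
        (hII _ (hP2cont.mul h1msincont) 0 L le_rfl hL0.le le_rfl)
        (hII _ (continuousOn_const.mul h1msincont) 0 L le_rfl hL0.le le_rfl)
        (f := fun r => (Pf m (ω r))^2 * (1 - Real.sin (θ r)))
        (g := fun r => (b*ε^m)^2 * (1 - Real.sin (θ r)))
        (fun x hx => mul_le_mul_of_nonneg_right (hPb x hx)
          (by linarith [Real.sin_le_one (θ x)]))
      rwa [intervalIntegral.integral_const_mul, hone_sub] at hmono
    have hlow : ε^p * (c*ε^m)^2 ≤ ∫ r in (0:ℝ)..L, (Pf m (ω r))^2 := by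
      have i1 := hII _ hP2cont 0 (s₀ - ε^p) le_rfl hs₀ρ0 (by linarith [hs₀.2])
      have i2 := hII _ hP2cont (s₀ - ε^p) s₀ hs₀ρ0 (by linarith) hs₀.2
      have i3 := hII _ hP2cont s₀ L (le_trans hs₀ρ0 (by linarith)) hs₀.2 le_rfl
      have e1 := intervalIntegral.integral_add_adjacent_intervals i1 i2
      have e2 := intervalIntegral.integral_add_adjacent_intervals (i1.trans i2) i3
      have n1 : 0 ≤ ∫ r in (0:ℝ)..(s₀ - ε^p), (Pf m (ω r))^2 :=
        intervalIntegral.integral_nonneg hs₀ρ0 (fun x _ => sq_nonneg _)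
      have n3 : 0 ≤ ∫ r in s₀..L, (Pf m (ω r))^2 :=
        intervalIntegral.integral_nonneg hs₀.2 (fun x _ => sq_nonneg _)
      have hBc := intervalIntegral.integral_mono_on (by linarith : s₀ - ε^p ≤ s₀)
        intervalIntegrable_const i2 (fun x hx => hP2 x hx)
      rw [intervalIntegral.integral_const] at hBc
      have hρeq2 : s₀ - (s₀ - ε^p) = ε^p := by ring
      rw [hρeq2, smul_eq_mul] at hBc
      linarith [e1, e2, hBc, n1, n3]
    have hfinal : ε^p * (c*ε^m)^2 ≤ (b*ε^m)^2 * (L-ε) := by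
      rw [← hsplit2] at hlow
      linarith [hlow, hup]
    have hx2 : (0:ℝ) < (ε^m)^2 := by positivity
    have h1 : ε^p*c^2 ≤ b^2*(a2*ε^((m:ℝ)-1)) := by
      have hb2nn : (0:ℝ) ≤ b^2 * (ε^m)^2 := by positivity
      have hchain : (ε^p*c^2) * (ε^m)^2 ≤ (b^2*(a2*ε^((m:ℝ)-1))) * (ε^m)^2 := by
        have hA : (ε^p*c^2) * (ε^m)^2 = ε^p * (c*ε^m)^2 := by ring
        have hB : (b*ε^m)^2 * (L-ε) ≤ (b^2*(ε^m)^2) * (a2*ε^((m:ℝ)-1)) := by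
          have := mul_le_mul_of_nonneg_left hD hb2nn
          calc (b*ε^m)^2 * (L-ε) = (b^2*(ε^m)^2) * (L-ε) := by ring
          _ ≤ (b^2*(ε^m)^2) * (a2*ε^((m:ℝ)-1)) := this
        rw [hA]
        calc ε^p * (c*ε^m)^2 ≤ (b*ε^m)^2 * (L-ε) := hfinal
        _ ≤ (b^2*(ε^m)^2) * (a2*ε^((m:ℝ)-1)) := hB
        _ = (b^2*(a2*ε^((m:ℝ)-1))) * (ε^m)^2 := by ring
      exact (mul_le_mul_iff_of_pos_right hx2).mp hchain
    have h3 : c^2 ≤ b^2*a2*ε^(2*q) := by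
      rw [hm1pq] at h1
      have hchain2 : c^2 * ε^p ≤ (b^2*a2*ε^(2*q)) * ε^p := by
        calc c^2 * ε^p = ε^p*c^2 := by ring
        _ ≤ b^2*(a2*(ε^p*ε^(2*q))) := h1
        _ = (b^2*a2*ε^(2*q))*ε^p := by ring
      exact (mul_le_mul_iff_of_pos_right hppos).mp hchain2
    linarith [hc5, h3]
  -- conclusion
  intro s hs
  have hC1' : min C1 (K/2) ≤ C1 := min_le_left _ _
  have hCK : min C1 (K/2) ≤ K/2 := min_le_right _ _
  have hC1p : 0 < C1 * ε^p := mul_pos hC1 hppos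
  constructor
  · by_contra hcon
    push_neg at hcon
    have h1 := part2 s hs
    have hlt : (ω s).1 < C1 * ε^p :=
      lt_of_lt_of_le hcon (mul_le_mul_of_nonneg_right hC1' hppos.le)
    have hneg : (ω s).1 ≤ -(C1*ε^p) := by
      rcases abs_cases ((ω s).1) with ⟨he, -⟩ | ⟨he, -⟩
      · rw [he] at h1; linarith
      · rw [he] at h1; linarith
    have hcont1 : ContinuousOn (fun r => (ω r).1) (Icc s L) :=
      hωc1.mono (Icc_subset_Icc (le_trans ht.1 hs.1) le_rfl)
    have h0mem : (0:ℝ) ∈ Icc ((ω s).1) ((ω L).1) := by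
      constructor
      · linarith
      · rw [hωL1]; positivity
    obtain ⟨r, hrmem, hr0⟩ := intermediate_value_Icc hs.2 hcont1 h0mem
    have h2 := part2 r ⟨le_trans hs.1 hrmem.1, hrmem.2⟩
    have hr0' : (ω r).1 = 0 := hr0
    rw [hr0', abs_zero] at h2
    linarith
  · have h2 := part1 s hs
    have h3 : min C1 (K/2) * ε ≤ K/2*ε := mul_le_mul_of_nonneg_right hCK hε.le
    linarith
end

section
/- Let m ≥ 5 be an odd integer, λ < 0, L > 0, and let ω : [0,L] → ℝ² and θ : [0,L] → ℝ be continuously differentiable functions satisfying ω′(t) = (cos θ(t), sin θ(t)) and θ′(t) = λ·Q(ω(t)) for all t ∈ [0,L]. Suppose t* ∈ (0,L) is such that ω₁(t*) > 0, P(ω(t*)) > 0, sin θ(t*) > 0, and the function t ↦ P(ω(t)) (which is twice continuously differentiable) has vanishing first derivative and nonpositive second derivative at t*. Then |λ|·P(ω(t*))^{(m+2)/m} ≤ m(m−1)/8. -/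
set_option maxHeartbeats 1000000 in
/-- along a solution of the planar extremal ODE with `λ < 0`, at an interior
time `t*` where `ω₁ > 0`, `P(ω(t*)) > 0`, `sin θ(t*) > 0`, and `P ∘ ω` has vanishing first
derivative and nonpositive second derivative, one has
`|λ| P(ω(t*))^{(m+2)/m} ≤ m(m−1)/8`. -/
theorem statement19 (m : ℕ) (hodd : Odd m) (hm : 5 ≤ m)
    (lam L : ℝ) (hlam : lam < 0) (hL : 0 < L)
    (ω : ℝ → ℝ × ℝ) (θ : ℝ → ℝ)
    (hω : ∀ t ∈ Set.Icc (0:ℝ) L, HasDerivAt ω (Real.cos (θ t), Real.sin (θ t)) t)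
    (hθ : ∀ t ∈ Set.Icc (0:ℝ) L, HasDerivAt θ (lam * Qf m (ω t)) t)
    (tstar : ℝ) (htstar : tstar ∈ Set.Ioo (0:ℝ) L)
    (h1 : 0 < (ω tstar).1) (h2 : 0 < Pf m (ω tstar)) (h3 : 0 < Real.sin (θ tstar))
    (h4 : deriv (fun t => Pf m (ω t)) tstar = 0)
    (h5 : deriv (deriv (fun t => Pf m (ω t))) tstar ≤ 0) :
    |lam| * (Pf m (ω tstar)) ^ (((m : ℝ) + 2) / (m : ℝ)) ≤ (m : ℝ) * ((m : ℝ) - 1) / 8 := by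
  obtain ⟨ht0, htL⟩ := htstar
  have htmem : tstar ∈ Set.Icc (0:ℝ) L := ⟨ht0.le, htL.le⟩
  -- component derivatives
  have hω1 : ∀ t ∈ Set.Icc (0:ℝ) L, HasDerivAt (fun u => (ω u).1) (Real.cos (θ t)) t := by
    intro t ht
    have h := ((ContinuousLinearMap.fst ℝ ℝ ℝ).hasFDerivAt.comp t
      (hω t ht).hasFDerivAt).hasDerivAt
    simp at h
    exact h
  have hω2 : ∀ t ∈ Set.Icc (0:ℝ) L, HasDerivAt (fun u => (ω u).2) (Real.sin (θ t)) t := by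
    intro t ht
    have h := ((ContinuousLinearMap.snd ℝ ℝ ℝ).hasFDerivAt.comp t
      (hω t ht).hasFDerivAt).hasDerivAt
    simp at h
    exact h
  -- the first derivative of P ∘ ω
  set F : ℝ → ℝ := fun t =>
    2 * (ω t).1 * Real.cos (θ t) - (m : ℝ) * (ω t).2 ^ (m - 1) * Real.sin (θ t) with hF
  have hg : ∀ t ∈ Set.Icc (0:ℝ) L, HasDerivAt (fun u => Pf m (ω u)) (F t) t := by
    intro t ht
    have h1' := (hω1 t ht).pow 2
    have h2' := (hω2 t ht).pow m
    have := h1'.sub h2'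
    simp only [Pf, hF]
    convert this using 1
    · rfl
    · rfl
    · rfl
    · norm_num
  -- first order condition
  have hF0 : F tstar = 0 := by
    rw [← (hg tstar htmem).deriv]; exact h4
  -- second derivative
  have hθ' := hθ tstar htmem
  have hcos := hθ'.cos
  have hsin := hθ'.sin
  have hterm1 := ((hω1 tstar htmem).const_mul (2:ℝ)).mul hcos
  have hterm2 := (((hω2 tstar htmem).pow (m-1)).const_mul (m:ℝ)).mul hsin
  have hF' : HasDerivAt F
      ((2 * Real.cos (θ tstar)) * Real.cos (θ tstar)
        + (2 * (ω tstar).1) * (-Real.sin (θ tstar) * (lam * Qf m (ω tstar)))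
        - (((m : ℝ) * (((m - 1 : ℕ) : ℝ) * (ω tstar).2 ^ (m - 1 - 1) * Real.sin (θ tstar)))
            * Real.sin (θ tstar)
          + ((m : ℝ) * (ω tstar).2 ^ (m - 1))
            * (Real.cos (θ tstar) * (lam * Qf m (ω tstar))))) tstar := by
    have := hterm1.sub hterm2
    convert this using 2
    · rfl
    · rfl
    · rfl
    · simp only [Pi.pow_apply]
  have hdF : deriv (deriv (fun u => Pf m (ω u))) tstar = deriv F tstar := by
    apply Filter.EventuallyEq.deriv_eq
    filter_upwards [Ioo_mem_nhds ht0 htL] with t ht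
    exact (hg t ⟨ht.1.le, ht.2.le⟩).deriv
  have h5' := h5
  rw [hdF, hF'.deriv] at h5'
  -- abbreviations
  set A := (ω tstar).1 with hAdef
  set B := (ω tstar).2 with hBdef
  set c := Real.cos (θ tstar) with hcdef
  set s := Real.sin (θ tstar) with hsdef
  have hQ : Qf m (ω tstar) = 4 * A * (A ^ 2 - B ^ m) := by rfl
  have hP : Pf m (ω tstar) = A ^ 2 - B ^ m := by rfl
  have hm1 : ((m - 1 : ℕ) : ℝ) = (m : ℝ) - 1 := by
    push_cast [Nat.cast_sub (by omega : 1 ≤ m)]; ring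
  have hm11 : m - 1 - 1 = m - 2 := by omega
  rw [hm1, hm11] at h5'
  have hE : 2 * A * c = (m : ℝ) * B ^ (m - 1) * s := by
    have := hF0
    simp only [hF] at this
    linarith
  have hsc : s ^ 2 + c ^ 2 = 1 := Real.sin_sq_add_cos_sq (θ tstar)
  -- Multiply the second-order inequality by s and use the first-order condition
  set d : ℝ := lam * Qf m (ω tstar) with hddef
  have hsK : s * ((2 * c) * c + (2 * A) * (-s * d)
      - (((m : ℝ) * (((m : ℝ) - 1) * B ^ (m - 2) * s)) * s
        + ((m : ℝ) * B ^ (m - 1)) * (c * d))) ≤ 0 :=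
    mul_nonpos_of_nonneg_of_nonpos h3.le h5'
  have hid : s * ((2 * c) * c + (2 * A) * (-s * d)
      - (((m : ℝ) * (((m : ℝ) - 1) * B ^ (m - 2) * s)) * s
        + ((m : ℝ) * B ^ (m - 1)) * (c * d)))
      = 2 * c ^ 2 * s - 2 * A * d - (m : ℝ) * ((m : ℝ) - 1) * B ^ (m - 2) * s ^ 3 := by
    linear_combination (c * d) * hE - (2 * A * d) * hsc
  rw [hid] at hsK
  have hdq : d = lam * (4 * A * (A ^ 2 - B ^ m)) := by rw [hddef, hQ]
  rw [hdq] at hsK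
  have hsle : s ≤ 1 := hsdef ▸ Real.sin_le_one (θ tstar)
  clear_value A B c s d
  clear hterm1 hterm2 hsin hcos hF' h5 h5' hdF hg hω1 hω2 hω hθ hθ' h4 hF0
  -- key inequality
  have hc2s : 0 ≤ c ^ 2 * s := mul_nonneg (sq_nonneg c) h3.le
  have hkey : 8 * (-lam) * A ^ 2 * (A ^ 2 - B ^ m)
      ≤ (m : ℝ) * ((m : ℝ) - 1) * B ^ (m - 2) * s ^ 3 := by nlinarith [hsK, hc2s]
  have hP2 : 0 < A ^ 2 - B ^ m := by rw [hP] at h2; exact h2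
  have hnl : 0 < -lam := neg_pos.mpr hlam
  have hLpos : 0 < 8 * (-lam) * A ^ 2 * (A ^ 2 - B ^ m) :=
    mul_pos (mul_pos (mul_pos (by norm_num) hnl) (pow_pos h1 2)) hP2
  have hmR : (5:ℝ) ≤ (m:ℝ) := by exact_mod_cast hm
  have hs3 : 0 < s ^ 3 := by positivity
  -- B > 0
  have hmm1 : (0:ℝ) ≤ (m:ℝ) * ((m:ℝ) - 1) := by nlinarith
  have hBpow : 0 < B ^ (m - 2) := by
    by_contra hcon
    push_neg at hcon
    have hneg : (m:ℝ) * ((m:ℝ) - 1) * B ^ (m - 2) * s ^ 3 ≤ 0 :=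
      mul_nonpos_of_nonpos_of_nonneg
        (mul_nonpos_of_nonneg_of_nonpos hmm1 hcon) hs3.le
    linarith [lt_of_lt_of_le hLpos hkey]
  have hB : 0 < B := by
    have hodd2 : Odd (m - 2) := Nat.Odd.sub_even (by omega) hodd (by norm_num)
    exact hodd2.pow_pos_iff.mp hBpow
  -- s³ ≤ 1
  have hs1 : s ^ 3 ≤ 1 := by nlinarith
  have hkey2 : 8 * (-lam) * A ^ 2 * (A ^ 2 - B ^ m)
      ≤ (m : ℝ) * ((m : ℝ) - 1) * B ^ (m - 2) := by
    nlinarith [hkey, mul_le_mul_of_nonneg_left hs1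
      (by nlinarith [hBpow] : (0:ℝ) ≤ (m : ℝ) * ((m : ℝ) - 1) * B ^ (m - 2))]
  -- AM-GM step : (A² − Bᵐ)^{2/m} · B^{m−2} ≤ A²
  have hmpos : (0:ℝ) < (m:ℝ) := by linarith
  have hBm : 0 < B ^ m := pow_pos hB m
  have hAM := Real.geom_mean_le_arith_mean2_weighted
    (by positivity : (0:ℝ) ≤ 2 / (m:ℝ))
    (by rw [div_nonneg_iff]; left; constructor <;> linarith : (0:ℝ) ≤ ((m:ℝ) - 2) / (m:ℝ))
    hP2.le hBm.le
    (by field_simp; ring : 2 / (m:ℝ) + ((m:ℝ) - 2) / (m:ℝ) = 1)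
  have hBrw : (B ^ m : ℝ) ^ (((m:ℝ) - 2) / (m:ℝ)) = B ^ (m - 2) := by
    rw [← Real.rpow_natCast B m, ← Real.rpow_mul hB.le]
    rw [show (m:ℝ) * (((m:ℝ) - 2) / (m:ℝ)) = ((m - 2 : ℕ) : ℝ) by
      push_cast [Nat.cast_sub (by omega : 2 ≤ m)]; field_simp]
    exact Real.rpow_natCast B (m - 2)
  rw [hBrw] at hAM
  have hRHS : 2 / (m:ℝ) * (A ^ 2 - B ^ m) + ((m:ℝ) - 2) / (m:ℝ) * (B ^ m) ≤ A ^ 2 := by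
    rw [div_mul_eq_mul_div, div_mul_eq_mul_div, ← add_div, div_le_iff₀ hmpos]
    nlinarith [hP2, hBm, sq_nonneg A]
  have hcombo : (A ^ 2 - B ^ m) ^ ((2:ℝ) / (m:ℝ)) * B ^ (m - 2) ≤ A ^ 2 :=
    le_trans hAM hRHS
  -- put everything together
  have hX : 0 < (A ^ 2 - B ^ m) ^ ((2:ℝ) / (m:ℝ)) := Real.rpow_pos_of_pos hP2 _
  have step1 := mul_le_mul_of_nonneg_right hkey2 hX.le
  have step2 := mul_le_mul_of_nonneg_left hcombo hmm1
  have hfinal : (-lam) * ((A ^ 2 - B ^ m) * (A ^ 2 - B ^ m) ^ ((2:ℝ) / (m:ℝ))) * (8 * A ^ 2)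
      ≤ ((m : ℝ) * ((m : ℝ) - 1) / 8) * (8 * A ^ 2) := by nlinarith [step1, step2]
  have h8A : 0 < 8 * A ^ 2 := by positivity
  have hres := (mul_le_mul_iff_of_pos_right h8A).mp hfinal
  -- rewrite the goal
  rw [abs_of_neg hlam, hP]
  rw [show ((m:ℝ) + 2) / (m:ℝ) = 1 + 2 / (m:ℝ) by field_simp]
  rw [Real.rpow_add hP2, Real.rpow_one]
  exact hres
end
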